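/- arXiv:1204.2693 — 3 statements merged into one kernel-verified Lean document; each statement's English description precedes it below -/
import Mathlib

section
/- For every n ≥ 3, there exists an (S_1×S_{n-1})-equivariant acyclic matching on the poset of nonempty finite chains of Π̄_n ordered by inclusion (the face poset of the nerve of Π̄_n) whose set of critical elements is exactly C_n ∪ {α_n}, where α_n is the one-element chain { {{1},{2,…,n}} }. -/
/-- The poset `Π̄_n`: set partitions of `Fin n` (modeled as setoids, ordered by refinement,
with the finer partition smaller), with the minimum `⊥` and maximum `⊤` removed. -/
def BarPi (n : ℕ) : Type :=
  {s : Setoid (Fin n) // s ≠ ⊥ ∧ s ≠ ⊤}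

instance (n : ℕ) : PartialOrder (BarPi n) :=
  inferInstanceAs (PartialOrder {s : Setoid (Fin n) // s ≠ ⊥ ∧ s ≠ ⊤})

/-- The natural (relabeling) action of the symmetric group on setoids of `Fin n`. -/
instance permSetoidAction (n : ℕ) : MulAction (Equiv.Perm (Fin n)) (Setoid (Fin n)) where
  smul g s := Setoid.comap (⇑g⁻¹) s
  one_smul s := Setoid.ext fun x y => Iff.rfl
  mul_smul g h s := Setoid.ext fun x y => Iff.rfl

theorem perm_smul_setoid_rel (n : ℕ) (g : Equiv.Perm (Fin n)) (s : Setoid (Fin n))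
    (x y : Fin n) : (g • s) x y ↔ s (g⁻¹ x) (g⁻¹ y) := Iff.rfl

theorem perm_smul_bot (n : ℕ) (g : Equiv.Perm (Fin n)) :
    g • (⊥ : Setoid (Fin n)) = ⊥ := by
  apply Setoid.ext
  intro x y
  rw [perm_smul_setoid_rel]
  constructor
  · intro h
    have : (⊥ : Setoid (Fin n)) (g⁻¹ x) (g⁻¹ y) := h
    rw [show ⇑(⊥ : Setoid (Fin n)) = (· = ·) from Setoid.bot_def] at this
    have := congrArg g this
    simpa using this
  · intro h
    have : x = y := by rwa [show ⇑(⊥ : Setoid (Fin n)) = (· = ·) from Setoid.bot_def] at h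
    subst this
    exact (⊥ : Setoid (Fin n)).iseqv.refl _

theorem perm_smul_top (n : ℕ) (g : Equiv.Perm (Fin n)) :
    g • (⊤ : Setoid (Fin n)) = ⊤ := by
  apply Setoid.ext
  intro x y
  rw [perm_smul_setoid_rel]

theorem perm_smul_mono (n : ℕ) (g : Equiv.Perm (Fin n)) :
    Monotone (fun s : Setoid (Fin n) => g • s) := by
  intro s t h
  intro x y hxy
  exact Setoid.le_def.mp h hxy

/-- The relabeling action of the symmetric group on `Π̄_n`. -/
instance permBarPiAction (n : ℕ) : MulAction (Equiv.Perm (Fin n)) (BarPi n) where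
  smul g s := ⟨g • s.1, by
      constructor
      · intro h
        apply s.2.1
        have := congrArg (fun t => g⁻¹ • t) h
        simpa [perm_smul_bot] using this
      · intro h
        apply s.2.2
        have := congrArg (fun t => g⁻¹ • t) h
        simpa [perm_smul_top] using this⟩
  one_smul s := Subtype.ext (one_smul _ _)
  mul_smul g h s := Subtype.ext (mul_smul g h s.1)

theorem perm_smul_barPi_mono (n : ℕ) (g : Equiv.Perm (Fin n)) :
    Monotone (fun s : BarPi n => g • s) := by
  intro s t h
  exact perm_smul_mono n g h

/-- The subgroup `S_1 × S_{n-1}` of permutations fixing the distinguished element `0`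
(playing the role of `1 ∈ [n]`). -/
def S1Sn (n : ℕ) [NeZero n] : Subgroup (Equiv.Perm (Fin n)) :=
  MulAction.stabilizer (Equiv.Perm (Fin n)) (0 : Fin n)

/-- The set of partitions in `Π̄_n` in which every block not containing the distinguished
element `0` is a singleton. -/
def blockSet (n : ℕ) [NeZero n] : Set (BarPi n) :=
  {s | ∀ x y : Fin n, s.1 x y → s.1 x 0 ∨ x = y}

/-- The face poset of the nerve of `Π̄_n`: nonempty finite chains in `Π̄_n`, ordered
by inclusion. -/
def FacePoset (n : ℕ) : Type :=
  {c : Finset (BarPi n) // c.Nonempty ∧ IsChain (· ≤ ·) (↑c : Set (BarPi n))}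

instance (n : ℕ) : PartialOrder (FacePoset n) where
  le c d := c.1 ⊆ d.1
  le_refl c := subset_rfl
  le_trans a b c hab hbc := Finset.Subset.trans hab hbc
  le_antisymm a b hab hba := Subtype.ext (Finset.Subset.antisymm hab hba)

noncomputable instance (n : ℕ) : DecidableEq (BarPi n) := Classical.decEq _

/-- The relabeling action of the symmetric group on the face poset. -/
noncomputable instance permFaceAction (n : ℕ) : MulAction (Equiv.Perm (Fin n)) (FacePoset n) where
  smul g c := ⟨c.1.image (fun s => g • s), by
    constructor
    · exact c.2.1.image _
    · intro x hx y hy hxy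
      simp only [Finset.coe_image, Set.mem_image, Finset.mem_coe] at hx hy
      obtain ⟨x', hx', rfl⟩ := hx
      obtain ⟨y', hy', rfl⟩ := hy
      have hxy' : x' ≠ y' := fun h => hxy (by rw [h])
      rcases c.2.2 hx' hy' hxy' with h | h
      · exact Or.inl (perm_smul_barPi_mono n g h)
      · exact Or.inr (perm_smul_barPi_mono n g h)⟩
  one_smul c := by
    apply Subtype.ext
    show c.1.image (fun s => (1 : Equiv.Perm (Fin n)) • s) = c.1
    rw [show (fun s : BarPi n => (1 : Equiv.Perm (Fin n)) • s) = id from funext fun s => one_smul _ s]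
    exact Finset.image_id
  mul_smul g h c := by
    apply Subtype.ext
    show c.1.image (fun s => (g * h) • s) = (c.1.image (fun s => h • s)).image (fun s => g • s)
    rw [Finset.image_image, show ((fun s : BarPi n => g • s) ∘ (fun s => h • s)) = (fun s => (g * h) • s) from funext fun s => (mul_smul g h s).symm]

/-- `C_n`: the chains of cardinality `n - 2` in `Π̄_n` all of whose members lie in
`blockSet n`, i.e. are partitions in which every block not containing `0` is a singleton. -/
def Cn (n : ℕ) [NeZero n] : Set (FacePoset n) :=
  {c | (↑c.1 : Set (BarPi n)) ⊆ blockSet n ∧ c.1.card = n - 2}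

/-- The partition `{{1}, {2, …, n}}` of `[n]`, i.e. `{{0}, {1, …, n-1}}` of `Fin n`,
as a setoid. -/
def alphaSetoid (n : ℕ) [NeZero n] : Setoid (Fin n) :=
  ⟨fun x y => x = y ∨ (x ≠ 0 ∧ y ≠ 0), by
    constructor
    · intro x; exact Or.inl rfl
    · rintro x y (rfl | ⟨hx, hy⟩)
      · exact Or.inl rfl
      · exact Or.inr ⟨hy, hx⟩
    · rintro x y z (rfl | ⟨hx, hy⟩) (rfl | ⟨hy', hz⟩)
      · exact Or.inl rfl
      · exact Or.inr ⟨hy', hz⟩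
      · exact Or.inr ⟨hx, hy⟩
      · exact Or.inr ⟨hx, hz⟩⟩

/-- The partition `{{1}, {2, …, n}}` as an element of `Π̄_n` (requires `n ≥ 3`). -/
def alphaBar (n : ℕ) [NeZero n] (hn : 3 ≤ n) : BarPi n :=
  ⟨alphaSetoid n, by
    constructor
    · intro h
      have h12 : alphaSetoid n ⟨1, by omega⟩ ⟨2, by omega⟩ :=
        Or.inr ⟨by simp [Fin.ext_iff], by simp [Fin.ext_iff]⟩
      rw [h] at h12
      have : (⟨1, by omega⟩ : Fin n) = ⟨2, by omega⟩ := h12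
      simp [Fin.ext_iff] at this
    · intro h
      have h01 : (⊤ : Setoid (Fin n)) 0 ⟨1, by omega⟩ := trivial
      rw [← h] at h01
      rcases h01 with h01 | ⟨h0, _⟩
      · have : (0 : Fin n) = ⟨1, by omega⟩ := h01
        simp [Fin.ext_iff] at this
      · exact h0 rfl⟩

/-- The one-element chain `α_n = {{{1},{2,…,n}}}` in the face poset. -/
def alphaChain (n : ℕ) [NeZero n] (hn : 3 ≤ n) : FacePoset n :=
  ⟨{alphaBar n hn}, Finset.singleton_nonempty _, by
    simp only [Finset.coe_singleton]
    exact Set.Subsingleton.isChain (Set.subsingleton_singleton)⟩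

section Matchings

variable {P : Type*} [PartialOrder P]

/-- `b` covers `a` within the subposet on the subset `S`. -/
def CovByWithin (S : Set P) (a b : P) : Prop :=
  a ∈ S ∧ b ∈ S ∧ a < b ∧ ∀ c ∈ S, a < c → ¬c < b

/-- A partial matching on the subposet of `P` induced on `S`, regarded as a set of
pairs of elements of `P`: every pair is a covering pair within `S`, and every element
occurs in at most one pair. -/
def IsMatchingOn (S : Set P) (M : Set (P × P)) : Prop :=
  (∀ p ∈ M, CovByWithin S p.1 p.2) ∧
    ∀ p ∈ M, ∀ q ∈ M, (p.1 = q.1 ∨ p.1 = q.2 ∨ p.2 = q.1 ∨ p.2 = q.2) → p = q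

/-- A partial matching on the subposet induced on `S` is acyclic if there is no cycle
`a₁ ⋖ b₁ ⋗ a₂ ⋖ b₂ ⋗ ⋯ ⋗ a_k ⋖ b_k ⋗ a₁` with `k ≥ 2`, all `aᵢ` distinct and
`(aᵢ, bᵢ) ∈ M` (indices mod `k`, covering relations within `S`). -/
def IsAcyclicMatchingOn (S : Set P) (M : Set (P × P)) : Prop :=
  IsMatchingOn S M ∧
    ¬∃ (k : ℕ) (a b : ZMod k → P), 2 ≤ k ∧ Function.Injective a ∧
      ∀ i : ZMod k, (a i, b i) ∈ M ∧ CovByWithin S (a (i + 1)) (b i)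

/-- The critical elements of a matching `M` on the subposet induced on `S`: the elements
of `S` occurring in no pair of `M`. -/
def criticalSet (S : Set P) (M : Set (P × P)) : Set P :=
  {x ∈ S | ∀ p ∈ M, p.1 ≠ x ∧ p.2 ≠ x}

end Matchings

namespace EqMatch

open scoped Classical

noncomputable section

variable {n : ℕ}

theorem setoid_le_iff {s t : Setoid (Fin n)} : s ≤ t ↔ ∀ x y, s x y → t x y :=
  ⟨fun h x y hxy => h hxy, fun h x y hxy => h x y hxy⟩

theorem barpi_le_iff {π ρ : BarPi n} : π ≤ ρ ↔ π.1 ≤ ρ.1 := Iff.rfl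

theorem barpi_ext {π ρ : BarPi n} (h : π.1 = ρ.1) : π = ρ := Subtype.ext h

theorem setoid_eq_iff {s t : Setoid (Fin n)} : s = t ↔ ∀ x y, (s x y ↔ t x y) :=
  ⟨fun h x y => h ▸ Iff.rfl, fun h => Setoid.ext fun x y => h x y⟩

/-- The block of `0` in a partition. -/
def B0 [NeZero n] (π : BarPi n) : Finset (Fin n) :=
  Finset.univ.filter (fun x => π.1 x 0)

theorem mem_B0 [NeZero n] {π : BarPi n} {x : Fin n} : x ∈ B0 π ↔ π.1 x 0 := by
  simp [B0]

theorem zero_mem_B0 [NeZero n] (π : BarPi n) : 0 ∈ B0 π := mem_B0.2 (π.1.refl 0)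

theorem B0_mono [NeZero n] {π ρ : BarPi n} (h : π ≤ ρ) : B0 π ⊆ B0 ρ := by
  intro x hx
  exact mem_B0.2 (barpi_le_iff.1 h (mem_B0.1 hx))

/-- Membership in `blockSet` (the set `A`). -/
theorem mem_blockSet_iff [NeZero n] {π : BarPi n} :
    π ∈ blockSet n ↔ ∀ x y : Fin n, π.1 x y → π.1 x 0 ∨ x = y := Iff.rfl

/-- For `π ∈ A`, a nontrivially related pair lies in the block of 0. -/
theorem blockSet_pair [NeZero n] {π : BarPi n} (hπ : π ∈ blockSet n) {x y : Fin n}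
    (hxy : π.1 x y) (hne : x ≠ y) : x ∈ B0 π ∧ y ∈ B0 π := by
  rcases hπ x y hxy with h | h
  · refine ⟨mem_B0.2 h, mem_B0.2 ?_⟩
    exact π.1.trans (π.1.symm hxy) h
  · exact absurd h hne

theorem not_blockSet_iff [NeZero n] {π : BarPi n} :
    π ∉ blockSet n ↔ ∃ x y : Fin n, π.1 x y ∧ x ∉ B0 π ∧ y ∉ B0 π ∧ x ≠ y := by
  constructor
  · intro h
    rw [mem_blockSet_iff] at h
    push_neg at h
    obtain ⟨x, y, hxy, hx0, hne⟩ := h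
    refine ⟨x, y, hxy, by simpa [mem_B0] using hx0, ?_, hne⟩
    rw [mem_B0]
    intro hy0
    exact hx0 (π.1.trans hxy hy0)
  · rintro ⟨x, y, hxy, hx, _, hne⟩ hA
    rcases hA x y hxy with h | h
    · exact hx (mem_B0.2 h)
    · exact hne h

/-- The partition with one (possible) block `T` and all other elements singletons. -/
def blk (T : Finset (Fin n)) : Setoid (Fin n) :=
  ⟨fun x y => x = y ∨ (x ∈ T ∧ y ∈ T), by
    refine ⟨fun x => Or.inl rfl, ?_, ?_⟩
    · rintro x y (rfl | ⟨h1, h2⟩)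
      · exact Or.inl rfl
      · exact Or.inr ⟨h2, h1⟩
    · rintro x y z (rfl | ⟨h1, h2⟩) (rfl | ⟨h3, h4⟩)
      · exact Or.inl rfl
      · exact Or.inr ⟨h3, h4⟩
      · exact Or.inr ⟨h1, h2⟩
      · exact Or.inr ⟨h1, h4⟩⟩

theorem blk_rel {T : Finset (Fin n)} {x y : Fin n} :
    blk T x y ↔ x = y ∨ (x ∈ T ∧ y ∈ T) := Iff.rfl

theorem blk_mono {T T' : Finset (Fin n)} (h : T ⊆ T') : blk T ≤ blk T' := by
  rw [setoid_le_iff]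
  rintro x y (rfl | ⟨h1, h2⟩)
  · exact Or.inl rfl
  · exact Or.inr ⟨h h1, h h2⟩

theorem blk_singleton_le (s : Setoid (Fin n)) (z : Fin n) : blk {z} ≤ s := by
  rw [setoid_le_iff]
  rintro x y (rfl | ⟨h1, h2⟩)
  · exact s.refl x
  · simp only [Finset.mem_singleton] at h1 h2
    subst h1; subst h2; exact s.refl _

theorem le_blk_univ (s : Setoid (Fin n)) : s ≤ blk Finset.univ := by
  rw [setoid_le_iff]
  intro x y _
  exact Or.inr ⟨Finset.mem_univ x, Finset.mem_univ y⟩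

theorem blk_le_iff {T : Finset (Fin n)} {s : Setoid (Fin n)} :
    blk T ≤ s ↔ ∀ x ∈ T, ∀ y ∈ T, s x y := by
  rw [setoid_le_iff]
  constructor
  · intro h x hx y hy
    exact h x y (Or.inr ⟨hx, hy⟩)
  · rintro h x y (rfl | ⟨h1, h2⟩)
    · exact s.refl x
    · exact h x h1 y h2

/-- A partition in `A` equals `blk` of its zero block. -/
theorem blockSet_eq_blk [NeZero n] {π : BarPi n} (hπ : π ∈ blockSet n) :
    π.1 = blk (B0 π) := by
  rw [setoid_eq_iff]
  intro x y
  rw [blk_rel]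
  constructor
  · intro hxy
    by_cases hne : x = y
    · exact Or.inl hne
    · exact Or.inr (blockSet_pair hπ hxy hne)
  · rintro (rfl | ⟨h1, h2⟩)
    · exact π.1.refl x
    · exact π.1.trans (mem_B0.1 h1) (π.1.symm (mem_B0.1 h2))

theorem blk_mem_blockSet' [NeZero n] {T : Finset (Fin n)} (h0 : 0 ∈ T)
    {π : BarPi n} (hπ : π.1 = blk T) : π ∈ blockSet n := by
  intro x y hxy
  rw [hπ, blk_rel] at hxy ⊢
  rcases hxy with rfl | ⟨h1, h2⟩
  · exact Or.inr rfl
  · exact Or.inl (Or.inr ⟨h1, h0⟩)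

theorem B0_of_eq_blk [NeZero n] {T : Finset (Fin n)} (h0 : 0 ∈ T)
    {π : BarPi n} (hπ : π.1 = blk T) : B0 π = T := by
  ext x
  rw [mem_B0, hπ, blk_rel]
  constructor
  · rintro (rfl | ⟨h1, _⟩)
    · exact h0
    · exact h1
  · intro hx
    exact Or.inr ⟨hx, h0⟩

theorem B0_ne_univ [NeZero n] (π : BarPi n) : B0 π ≠ Finset.univ := by
  intro h
  apply π.2.2
  apply Setoid.ext
  intro x y
  rw [show ⇑(⊤ : Setoid (Fin n)) = ⊤ from Setoid.top_def]
  have hx : π.1 x 0 := mem_B0.1 (h ▸ Finset.mem_univ x)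
  have hy : π.1 y 0 := mem_B0.1 (h ▸ Finset.mem_univ y)
  exact ⟨fun _ => trivial, fun _ => π.1.trans hx (π.1.symm hy)⟩

theorem exists_rel_pair [NeZero n] (π : BarPi n) :
    ∃ x y : Fin n, π.1 x y ∧ x ≠ y := by
  by_contra h
  push_neg at h
  apply π.2.1
  apply Setoid.ext
  intro x y
  rw [show ⇑(⊥ : Setoid (Fin n)) = (· = ·) from Setoid.bot_def]
  exact ⟨fun hxy => h x y hxy, fun hxy => hxy ▸ π.1.refl x⟩

theorem B0_card_ge [NeZero n] {π : BarPi n} (hπ : π ∈ blockSet n) : 2 ≤ (B0 π).card := by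
  obtain ⟨x, y, hxy, hne⟩ := exists_rel_pair π
  obtain ⟨hx, hy⟩ := blockSet_pair hπ hxy hne
  have : ({x, y} : Finset (Fin n)) ⊆ B0 π := by
    intro z hz
    rcases Finset.mem_insert.1 hz with rfl | hz
    · exact hx
    · exact (Finset.mem_singleton.1 hz) ▸ hy
  calc 2 = ({x, y} : Finset (Fin n)).card := (Finset.card_pair hne).symm
    _ ≤ _ := Finset.card_le_card this


/-! ### chains of finsets: min and max -/

theorem finset_chain_min {α : Type*} [PartialOrder α] (s : Finset α) (hne : s.Nonempty)
    (hc : ∀ x ∈ s, ∀ y ∈ s, x ≤ y ∨ y ≤ x) : ∃ m ∈ s, ∀ x ∈ s, m ≤ x := by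
  obtain ⟨m, hm, hmin⟩ := s.exists_minimal hne
  refine ⟨m, hm, fun x hx => ?_⟩
  rcases hc m hm x hx with h | h
  · exact h
  · rcases eq_or_lt_of_le h with h' | h'
    · exact h'.ge
    · exact absurd (hmin hx h'.le) (not_le_of_gt h')

theorem finset_chain_max {α : Type*} [PartialOrder α] (s : Finset α) (hne : s.Nonempty)
    (hc : ∀ x ∈ s, ∀ y ∈ s, x ≤ y ∨ y ≤ x) : ∃ m ∈ s, ∀ x ∈ s, x ≤ m := by
  obtain ⟨m, hm, hmax⟩ := s.exists_maximal hne
  refine ⟨m, hm, fun x hx => ?_⟩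
  rcases hc m hm x hx with h | h
  · rcases eq_or_lt_of_le h with h' | h'
    · exact h'.ge
    · exact absurd (hmax hx h'.le) (not_le_of_gt h')
  · exact h

/-! ### The family of zero-blocks with sentinels -/

variable [NeZero n]

/-- The elements of the chain `c` that lie in `A`. -/
def aPart (c : FacePoset n) : Finset (BarPi n) := c.1.filter (· ∈ blockSet n)

/-- The family of zero-blocks of the `A`-members of `c`, together with the
sentinels `{0}` and `univ`. -/
def Bs (c : FacePoset n) : Finset (Finset (Fin n)) :=
  insert {0} (insert Finset.univ ((aPart c).image B0))

theorem mem_Bs {c : FacePoset n} {T : Finset (Fin n)} :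
    T ∈ Bs c ↔ T = {0} ∨ T = Finset.univ ∨ ∃ π ∈ c.1, π ∈ blockSet n ∧ B0 π = T := by
  simp only [Bs, Finset.mem_insert, Finset.mem_image, aPart, Finset.mem_filter]
  constructor
  · rintro (h | h | ⟨π, ⟨h1, h2⟩, h3⟩)
    · exact Or.inl h
    · exact Or.inr (Or.inl h)
    · exact Or.inr (Or.inr ⟨π, h1, h2, h3⟩)
  · rintro (h | h | ⟨π, h1, h2, h3⟩)
    · exact Or.inl h
    · exact Or.inr (Or.inl h)
    · exact Or.inr (Or.inr ⟨π, ⟨h1, h2⟩, h3⟩)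

theorem singleton_zero_mem_Bs (c : FacePoset n) : ({0} : Finset (Fin n)) ∈ Bs c :=
  mem_Bs.2 (Or.inl rfl)

theorem univ_mem_Bs (c : FacePoset n) : (Finset.univ : Finset (Fin n)) ∈ Bs c :=
  mem_Bs.2 (Or.inr (Or.inl rfl))

theorem zero_mem_of_mem_Bs {c : FacePoset n} {T : Finset (Fin n)} (h : T ∈ Bs c) : 0 ∈ T := by
  rcases mem_Bs.1 h with rfl | rfl | ⟨π, _, _, rfl⟩
  · exact Finset.mem_singleton_self 0
  · exact Finset.mem_univ 0
  · exact zero_mem_B0 π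

theorem chain_mem_comparable {c : FacePoset n} {π ρ : BarPi n}
    (hπ : π ∈ c.1) (hρ : ρ ∈ c.1) : π ≤ ρ ∨ ρ ≤ π := by
  by_cases h : π = ρ
  · exact Or.inl h.le
  · exact c.2.2 (Finset.mem_coe.2 hπ) (Finset.mem_coe.2 hρ) h

theorem Bs_chain {c : FacePoset n} : ∀ T ∈ Bs c, ∀ T' ∈ Bs c, T ⊆ T' ∨ T' ⊆ T := by
  intro T hT T' hT'
  rcases mem_Bs.1 hT with rfl | rfl | ⟨π, hπc, hπA, rfl⟩
  · left; intro x hx; rw [Finset.mem_singleton] at hx; exact hx ▸ zero_mem_of_mem_Bs hT'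
  · right; exact Finset.subset_univ _
  rcases mem_Bs.1 hT' with rfl | rfl | ⟨ρ, hρc, hρA, rfl⟩
  · right; intro x hx; rw [Finset.mem_singleton] at hx; exact hx ▸ zero_mem_B0 π
  · left; exact Finset.subset_univ _
  rcases chain_mem_comparable hπc hρc with h | h
  · exact Or.inl (B0_mono h)
  · exact Or.inr (B0_mono h)

/-- The successor of `T` in the family `Bs c` (`univ` if there is no strict superset). -/
def nxt (c : FacePoset n) (T : Finset (Fin n)) : Finset (Fin n) :=
  ((Bs c).filter (fun T' => T ⊂ T')).inf id

theorem nxt_spec {c : FacePoset n} {T : Finset (Fin n)} (h : T ≠ Finset.univ) :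
    nxt c T ∈ Bs c ∧ T ⊂ nxt c T ∧ ∀ T' ∈ Bs c, T ⊂ T' → nxt c T ⊆ T' := by
  set F := (Bs c).filter (fun T' => T ⊂ T') with hF
  have hne : F.Nonempty := ⟨Finset.univ, by
    rw [hF, Finset.mem_filter]
    exact ⟨univ_mem_Bs c, (Finset.ssubset_univ_iff).2 h⟩⟩
  have hch : ∀ x ∈ F, ∀ y ∈ F, x ≤ y ∨ y ≤ x := by
    intro x hx y hy
    rw [hF, Finset.mem_filter] at hx hy
    exact Bs_chain x hx.1 y hy.1
  obtain ⟨m, hm, hmin⟩ := finset_chain_min F hne hch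
  have hinf : nxt c T = m := by
    apply le_antisymm
    · exact Finset.inf_le hm
    · exact Finset.le_inf fun b hb => hmin b hb
  rw [Finset.mem_filter] at hm
  refine ⟨hinf ▸ hm.1, hinf ▸ hm.2, fun T' hT' hTT' => ?_⟩
  rw [hinf]
  exact hmin T' (Finset.mem_filter.2 ⟨hT', hTT'⟩)

/-- `T` has a "big gap" above it in `Bs c`. -/
def twoGap (c : FacePoset n) (T : Finset (Fin n)) : Prop :=
  ∃ x y : Fin n, x ≠ y ∧ (x ∈ nxt c T ∧ x ∉ T) ∧ (y ∈ nxt c T ∧ y ∉ T)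

/-- The candidate bases: elements of `Bs c` with a big gap above them. -/
def cands (c : FacePoset n) : Finset (Finset (Fin n)) :=
  (Bs c).filter (twoGap c)

/-- Noncriticality. -/
def NC (c : FacePoset n) : Prop := (cands c).Nonempty

/-- The base of the last big gap. -/
def Tst (c : FacePoset n) : Finset (Fin n) := (cands c).sup (id : Finset (Fin n) → Finset (Fin n))

theorem cands_ne_univ {c : FacePoset n} {T : Finset (Fin n)} (h : T ∈ cands c) :
    T ≠ Finset.univ := by
  rintro rfl
  rw [cands, Finset.mem_filter] at h
  obtain ⟨x, y, hxy, ⟨_, hx⟩, _⟩ := h.2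
  exact hx (Finset.mem_univ x)

theorem Tst_spec {c : FacePoset n} (h : NC c) :
    Tst c ∈ cands c ∧ ∀ T ∈ cands c, T ⊆ Tst c := by
  have hch : ∀ x ∈ cands c, ∀ y ∈ cands c, x ≤ y ∨ y ≤ x := by
    intro x hx y hy
    exact Bs_chain x (Finset.mem_filter.1 hx).1 y (Finset.mem_filter.1 hy).1
  obtain ⟨m, hm, hmax⟩ := finset_chain_max (cands c) h hch
  have : Tst c = m := by
    apply le_antisymm
    · exact Finset.sup_le fun b hb => hmax b hb
    · exact Finset.le_sup (f := (id : Finset (Fin n) → Finset (Fin n))) hm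
  rw [this]
  exact ⟨hm, hmax⟩

theorem Tst_mem_Bs {c : FacePoset n} (h : NC c) : Tst c ∈ Bs c :=
  (Finset.mem_filter.1 (Tst_spec h).1).1

theorem Tst_twoGap {c : FacePoset n} (h : NC c) : twoGap c (Tst c) :=
  (Finset.mem_filter.1 (Tst_spec h).1).2

theorem Tst_ne_univ {c : FacePoset n} (h : NC c) : Tst c ≠ Finset.univ :=
  cands_ne_univ (Tst_spec h).1

theorem zero_mem_Tst {c : FacePoset n} (h : NC c) : 0 ∈ Tst c :=
  zero_mem_of_mem_Bs (Tst_mem_Bs h)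

/-- The top of the last big gap. -/
def Vst (c : FacePoset n) : Finset (Fin n) := nxt c (Tst c)

theorem Vst_mem_Bs {c : FacePoset n} (h : NC c) : Vst c ∈ Bs c :=
  (nxt_spec (Tst_ne_univ h)).1

theorem Tst_ssubset_Vst {c : FacePoset n} (h : NC c) : Tst c ⊂ Vst c :=
  (nxt_spec (Tst_ne_univ h)).2.1

/-! ### The two-block partition and the toggle map -/

/-- The partition with blocks `T`, `V \ T` and singletons. -/
def blk2 (T V : Finset (Fin n)) : Setoid (Fin n) :=
  ⟨fun x y => x = y ∨ (x ∈ T ∧ y ∈ T) ∨ (x ∈ V ∧ x ∉ T ∧ y ∈ V ∧ y ∉ T), by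
    refine ⟨fun x => Or.inl rfl, ?_, ?_⟩
    · rintro x y (rfl | ⟨h1, h2⟩ | ⟨h1, h2, h3, h4⟩)
      · exact Or.inl rfl
      · exact Or.inr (Or.inl ⟨h2, h1⟩)
      · exact Or.inr (Or.inr ⟨h3, h4, h1, h2⟩)
    · rintro x y z (rfl | ⟨h1, h2⟩ | ⟨h1, h2, h3, h4⟩) (rfl | ⟨h5, h6⟩ | ⟨h5, h6, h7, h8⟩)
      · exact Or.inl rfl
      · exact Or.inr (Or.inl ⟨h5, h6⟩)
      · exact Or.inr (Or.inr ⟨h5, h6, h7, h8⟩)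
      · exact Or.inr (Or.inl ⟨h1, h2⟩)
      · exact Or.inr (Or.inl ⟨h1, h6⟩)
      · exact absurd h5 (by exact fun hh => h6 h2)
      · exact Or.inr (Or.inr ⟨h1, h2, h3, h4⟩)
      · exact absurd h5 h4
      · exact Or.inr (Or.inr ⟨h1, h2, h7, h8⟩)⟩

theorem blk2_rel {T V : Finset (Fin n)} {x y : Fin n} :
    blk2 T V x y ↔ x = y ∨ (x ∈ T ∧ y ∈ T) ∨ (x ∈ V ∧ x ∉ T ∧ y ∈ V ∧ y ∉ T) := Iff.rfl

/-- The distinguished partition of the chosen gap. -/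
def omg (c : FacePoset n) : Setoid (Fin n) := blk2 (Tst c) (Vst c)

theorem blk_Tst_le_omg (c : FacePoset n) : blk (Tst c) ≤ omg c := by
  rw [setoid_le_iff]
  rintro x y (rfl | ⟨h1, h2⟩)
  · exact Or.inl rfl
  · exact Or.inr (Or.inl ⟨h1, h2⟩)

theorem omg_le_blk_Vst {c : FacePoset n} (h : NC c) : omg c ≤ blk (Vst c) := by
  have hsub : Tst c ⊆ Vst c := (Tst_ssubset_Vst h).1
  rw [setoid_le_iff]
  rintro x y (rfl | ⟨h1, h2⟩ | ⟨h1, _, h3, _⟩)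
  · exact Or.inl rfl
  · exact Or.inr ⟨hsub h1, hsub h2⟩
  · exact Or.inr ⟨h1, h3⟩

theorem omg_zero_iff {c : FacePoset n} (h : NC c) {x : Fin n} :
    omg c x 0 ↔ x ∈ Tst c := by
  have h0 : 0 ∈ Tst c := zero_mem_Tst h
  rw [omg, blk2_rel]
  constructor
  · rintro (rfl | ⟨h1, _⟩ | ⟨_, _, _, h4⟩)
    · exact h0
    · exact h1
    · exact absurd h0 h4
  · intro hx
    exact Or.inr (Or.inl ⟨hx, h0⟩)

/-- The predicate defining the `f`-part (gap elements whose zero block sticks out). -/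
def fpred (c : FacePoset n) (π : BarPi n) : Prop :=
  π ∉ blockSet n ∧ blk (Tst c) ≤ π.1 ∧ π.1 ≤ blk (Vst c) ∧ ¬ B0 π ⊆ Tst c

def fSet (c : FacePoset n) : Finset (BarPi n) := c.1.filter (fpred c)

theorem mem_fSet {c : FacePoset n} {π : BarPi n} :
    π ∈ fSet c ↔ π ∈ c.1 ∧ fpred c π := Finset.mem_filter

theorem fSet_min {c : FacePoset n} (h : (fSet c).Nonempty) :
    ∃ m, m ∈ fSet c ∧ ∀ x ∈ fSet c, m ≤ x := by
  obtain ⟨m, hm, hmin⟩ := finset_chain_min (fSet c) h (by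
    intro x hx y hy
    exact chain_mem_comparable (mem_fSet.1 hx).1 (mem_fSet.1 hy).1)
  exact ⟨m, hm, hmin⟩

/-- The toggle partition of a chain. -/
def tmap (c : FacePoset n) : Setoid (Fin n) :=
  if h : ∃ m, m ∈ fSet c ∧ ∀ x ∈ fSet c, m ≤ x then h.choose.1 ⊓ omg c else omg c

theorem tmap_of_min {c : FacePoset n} {m : BarPi n} (hm : m ∈ fSet c)
    (hmin : ∀ x ∈ fSet c, m ≤ x) : tmap c = m.1 ⊓ omg c := by
  have hex : ∃ m, m ∈ fSet c ∧ ∀ x ∈ fSet c, m ≤ x := ⟨m, hm, hmin⟩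
  rw [tmap, dif_pos hex]
  have hsp := hex.choose_spec
  have : hex.choose = m := le_antisymm (hsp.2 m hm) (hmin _ hsp.1)
  rw [this]

theorem tmap_of_empty {c : FacePoset n} (h : fSet c = ∅) : tmap c = omg c := by
  rw [tmap, dif_neg]
  rintro ⟨m, hm, _⟩
  rw [h] at hm
  exact absurd hm (Finset.notMem_empty m)

theorem tmap_cases (c : FacePoset n) :
    (fSet c = ∅ ∧ tmap c = omg c) ∨
      ∃ m, m ∈ fSet c ∧ (∀ x ∈ fSet c, m ≤ x) ∧ tmap c = m.1 ⊓ omg c := by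
  rcases Finset.eq_empty_or_nonempty (fSet c) with h | h
  · exact Or.inl ⟨h, tmap_of_empty h⟩
  · obtain ⟨m, hm, hmin⟩ := fSet_min h
    exact Or.inr ⟨m, hm, hmin, tmap_of_min hm hmin⟩

theorem Tst_subset_B0 {c : FacePoset n} (h : NC c) {π : BarPi n}
    (hle : blk (Tst c) ≤ π.1) : Tst c ⊆ B0 π := by
  intro u hu
  exact mem_B0.2 (setoid_le_iff.1 hle u 0 (Or.inr ⟨hu, zero_mem_Tst h⟩))

/-- A witness pair for the toggle partition: a nontrivially related pair inside the gap. -/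
theorem tmap_pair {c : FacePoset n} (h : NC c) :
    ∃ x y : Fin n, x ≠ y ∧ tmap c x y ∧
      x ∈ Vst c ∧ x ∉ Tst c ∧ y ∈ Vst c ∧ y ∉ Tst c := by
  rcases tmap_cases c with ⟨_, ht⟩ | ⟨m, hm, _, ht⟩
  · obtain ⟨x, y, hxy, ⟨hx1, hx2⟩, hy1, hy2⟩ := Tst_twoGap h
    refine ⟨x, y, hxy, ?_, hx1, hx2, hy1, hy2⟩
    rw [ht]
    exact Or.inr (Or.inr ⟨hx1, hx2, hy1, hy2⟩)
  · obtain ⟨hmc, hmA, hmT, hmV, hmB⟩ :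
        m ∈ c.1 ∧ m ∉ blockSet n ∧ blk (Tst c) ≤ m.1 ∧ m.1 ≤ blk (Vst c) ∧
          ¬ B0 m ⊆ Tst c := by
      have := mem_fSet.1 hm
      exact ⟨this.1, this.2.1, this.2.2.1, this.2.2.2.1, this.2.2.2.2⟩
    obtain ⟨x, y, hxy, hxB, hyB, hne⟩ := not_blockSet_iff.1 hmA
    have hxV : x ∈ Vst c ∧ y ∈ Vst c := by
      rcases setoid_le_iff.1 hmV x y hxy with h' | h'
      · exact absurd h' hne
      · exact h'
    have hTB := Tst_subset_B0 h hmT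
    have hxT : x ∉ Tst c := fun hx => hxB (hTB hx)
    have hyT : y ∉ Tst c := fun hy => hyB (hTB hy)
    refine ⟨x, y, hne, ?_, hxV.1, hxT, hxV.2, hyT⟩
    rw [ht, Setoid.inf_iff_and]
    exact ⟨hxy, Or.inr (Or.inr ⟨hxV.1, hxT, hxV.2, hyT⟩)⟩

theorem blk_Tst_le_tmap {c : FacePoset n} (h : NC c) : blk (Tst c) ≤ tmap c := by
  rcases tmap_cases c with ⟨_, ht⟩ | ⟨m, hm, _, ht⟩
  · rw [ht]; exact blk_Tst_le_omg c
  · rw [ht]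
    exact le_inf (mem_fSet.1 hm).2.2.1 (blk_Tst_le_omg c)

theorem tmap_le_omg (c : FacePoset n) : tmap c ≤ omg c := by
  rcases tmap_cases c with ⟨_, ht⟩ | ⟨m, _, _, ht⟩
  · rw [ht]
  · rw [ht]; exact inf_le_right

theorem tmap_le_blk_Vst {c : FacePoset n} (h : NC c) : tmap c ≤ blk (Vst c) :=
  le_trans (tmap_le_omg c) (omg_le_blk_Vst h)

theorem tmap_zero_iff {c : FacePoset n} (h : NC c) {x : Fin n} :
    tmap c x 0 ↔ x ∈ Tst c := by
  constructor
  · intro hx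
    exact (omg_zero_iff h).1 (setoid_le_iff.1 (tmap_le_omg c) x 0 hx)
  · intro hx
    exact setoid_le_iff.1 (blk_Tst_le_tmap h) x 0 (Or.inr ⟨hx, zero_mem_Tst h⟩)

theorem tmap_ne_bot {c : FacePoset n} (h : NC c) : tmap c ≠ ⊥ := by
  obtain ⟨x, y, hne, hxy, _⟩ := tmap_pair h
  intro hbot
  rw [hbot] at hxy
  have : x = y := by
    rwa [show ⇑(⊥ : Setoid (Fin n)) = (· = ·) from Setoid.bot_def] at hxy
  exact hne this

theorem tmap_ne_top {c : FacePoset n} (h : NC c) : tmap c ≠ ⊤ := by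
  obtain ⟨x, y, hne, hxy, hx1, hx2, _⟩ := tmap_pair h
  intro htop
  have : tmap c x 0 := by
    rw [htop]
    rw [show ⇑(⊤ : Setoid (Fin n)) = ⊤ from Setoid.top_def]
    trivial
  exact hx2 ((tmap_zero_iff h).1 this)

/-! ### The toggle element and comparability with the chain -/

/-- The toggle element of a chain (a junk value for critical chains). -/
def tBar (hn : 3 ≤ n) (c : FacePoset n) : BarPi n :=
  if h : NC c then ⟨tmap c, tmap_ne_bot h, tmap_ne_top h⟩ else alphaBar n hn

theorem tBar_val (hn : 3 ≤ n) {c : FacePoset n} (h : NC c) : (tBar hn c).1 = tmap c := by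
  rw [tBar]
  exact congrArg Subtype.val (dif_pos h)

theorem B0_tBar (hn : 3 ≤ n) {c : FacePoset n} (h : NC c) : B0 (tBar hn c) = Tst c := by
  ext x
  rw [mem_B0, tBar_val hn h]
  exact tmap_zero_iff h

theorem tBar_not_blockSet (hn : 3 ≤ n) {c : FacePoset n} (h : NC c) : tBar hn c ∉ blockSet n := by
  obtain ⟨x, y, hne, hxy, _, hxT, _, hyT⟩ := tmap_pair h
  rw [not_blockSet_iff]
  refine ⟨x, y, ?_, ?_, ?_, hne⟩
  · rw [tBar_val hn h]; exact hxy
  · rw [B0_tBar hn h]; exact hxT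
  · rw [B0_tBar hn h]; exact hyT

theorem Bs_split {c : FacePoset n} (h : NC c) {T : Finset (Fin n)} (hT : T ∈ Bs c) :
    T ⊆ Tst c ∨ Vst c ⊆ T := by
  rcases Bs_chain T hT (Tst c) (Tst_mem_Bs h) with h' | h'
  · exact Or.inl h'
  · rcases eq_or_ne (Tst c) T with rfl | hne
    · exact Or.inl subset_rfl
    · exact Or.inr ((nxt_spec (Tst_ne_univ h)).2.2 T hT (ssubset_of_subset_of_ne h' hne))

theorem mem_comp_blk {c : FacePoset n} {π : BarPi n} (hπ : π ∈ c.1)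
    {T : Finset (Fin n)} (hT : T ∈ Bs c) : π.1 ≤ blk T ∨ blk T ≤ π.1 := by
  rcases mem_Bs.1 hT with rfl | rfl | ⟨ρ, hρc, hρA, rfl⟩
  · exact Or.inr (blk_singleton_le π.1 0)
  · exact Or.inl (le_blk_univ π.1)
  · rcases chain_mem_comparable hπ hρc with h | h
    · exact Or.inl (blockSet_eq_blk hρA ▸ barpi_le_iff.1 h)
    · exact Or.inr (blockSet_eq_blk hρA ▸ barpi_le_iff.1 h)

/-- Legality: the toggle partition is comparable with every member of the chain. -/
theorem tmap_compat {c : FacePoset n} (h : NC c) :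
    ∀ π ∈ c.1, π.1 ≤ tmap c ∨ tmap c ≤ π.1 := by
  intro π hπ
  by_cases hA : π ∈ blockSet n
  · -- A-elements
    have hB : B0 π ∈ Bs c := mem_Bs.2 (Or.inr (Or.inr ⟨π, hπ, hA, rfl⟩))
    rcases Bs_split h hB with h' | h'
    · left
      calc π.1 = blk (B0 π) := blockSet_eq_blk hA
        _ ≤ blk (Tst c) := blk_mono h'
        _ ≤ tmap c := blk_Tst_le_tmap h
    · right
      calc tmap c ≤ blk (Vst c) := tmap_le_blk_Vst h
        _ ≤ blk (B0 π) := blk_mono h'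
        _ = π.1 := (blockSet_eq_blk hA).symm
  · -- non-A elements
    by_cases hT : π.1 ≤ blk (Tst c)
    · exact Or.inl (le_trans hT (blk_Tst_le_tmap h))
    have hT' : blk (Tst c) ≤ π.1 := (mem_comp_blk hπ (Tst_mem_Bs h)).resolve_left hT
    by_cases hV : blk (Vst c) ≤ π.1
    · exact Or.inr (le_trans (tmap_le_blk_Vst h) hV)
    have hV' : π.1 ≤ blk (Vst c) := (mem_comp_blk hπ (Vst_mem_Bs h)).resolve_right hV
    have hTB : Tst c ⊆ B0 π := Tst_subset_B0 h hT'
    by_cases hB : B0 π ⊆ Tst c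
    · -- h-part element : below the toggle
      left
      have hπomg : π.1 ≤ omg c := by
        rw [setoid_le_iff]
        intro x y hxy
        by_cases hxyeq : x = y
        · exact Or.inl hxyeq
        have hxyV : x ∈ Vst c ∧ y ∈ Vst c :=
          (setoid_le_iff.1 hV' x y hxy).resolve_left hxyeq
        by_cases hx0 : x ∈ B0 π
        · have hy0 : y ∈ B0 π :=
            mem_B0.2 (π.1.trans (π.1.symm hxy) (mem_B0.1 hx0))
          exact Or.inr (Or.inl ⟨hB hx0, hB hy0⟩)
        · have hxT2 : x ∉ Tst c := fun hx => hx0 (hTB hx)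
          have hyT2 : y ∉ Tst c := by
            intro hy
            exact hx0 (mem_B0.2 (π.1.trans hxy (mem_B0.1 (hTB hy))))
          exact Or.inr (Or.inr ⟨hxyV.1, hxT2, hxyV.2, hyT2⟩)
      rcases tmap_cases c with ⟨_, ht⟩ | ⟨m, hm, _, ht⟩
      · rw [ht]; exact hπomg
      · rw [ht]
        refine le_inf ?_ hπomg
        have hcomp := chain_mem_comparable hπ (mem_fSet.1 hm).1
        rcases hcomp with h' | h'
        · exact barpi_le_iff.1 h'
        · exfalso
          exact (mem_fSet.1 hm).2.2.2.2
            (subset_trans (B0_mono h') hB)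
    · -- f-part element : above the toggle
      right
      have hπf : π ∈ fSet c := mem_fSet.2 ⟨hπ, hA, hT', hV', hB⟩
      obtain ⟨m, hm, hmin⟩ := fSet_min ⟨π, hπf⟩
      rw [tmap_of_min hm hmin]
      exact le_trans inf_le_left (barpi_le_iff.1 (hmin π hπf))

theorem tBar_compat (hn : 3 ≤ n) {c : FacePoset n} (h : NC c) :
    ∀ π ∈ c.1, π ≤ tBar hn c ∨ tBar hn c ≤ π := by
  intro π hπ
  rw [barpi_le_iff, barpi_le_iff, tBar_val hn h]
  exact tmap_compat h π hπ

/-- The chain `c` with the toggle element inserted. -/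
def chainIns (hn : 3 ≤ n) (c : FacePoset n) (h : NC c) : FacePoset n :=
  ⟨insert (tBar hn c) c.1, Finset.insert_nonempty _ _, by
    rw [Finset.coe_insert]
    refine IsChain.insert c.2.2 ?_
    intro b hb _
    rcases tBar_compat hn h b (Finset.mem_coe.1 hb) with h' | h'
    · exact Or.inr h'
    · exact Or.inl h'⟩

/-! ### Transfer lemmas -/

theorem flag_congr {c d : FacePoset n} (h : aPart c = aPart d) :
    Bs c = Bs d ∧ cands c = cands d ∧ Tst c = Tst d ∧ Vst c = Vst d ∧
      omg c = omg d ∧ (NC c ↔ NC d) ∧ ∀ π, fpred c π ↔ fpred d π := by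
  have hBs : Bs c = Bs d := by unfold Bs; rw [h]
  have hnxt : nxt c = nxt d := by funext T; unfold nxt; rw [hBs]
  have hcands : cands c = cands d := by
    unfold cands twoGap; rw [hBs, hnxt]
  have hTst : Tst c = Tst d := by unfold Tst; rw [hcands]
  have hVst : Vst c = Vst d := by unfold Vst; rw [hnxt, hTst]
  have homg : omg c = omg d := by unfold omg; rw [hTst, hVst]
  refine ⟨hBs, hcands, hTst, hVst, homg, by unfold NC; rw [hcands], fun π => ?_⟩
  unfold fpred
  rw [hTst, hVst]

theorem tmap_congr {c d : FacePoset n} (hf : fSet c = fSet d) (ho : omg c = omg d) :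
    tmap c = tmap d := by
  rcases tmap_cases c with ⟨he, ht⟩ | ⟨m, hm, hmin, ht⟩
  · rw [ht, ho, tmap_of_empty (hf ▸ he)]
  · rw [ht, ho, tmap_of_min (hf ▸ hm) (fun x hx => hmin x (hf ▸ hx))]

/-- Inserting the toggle element does not change any of the structure. -/
theorem ins_transfer (hn : 3 ≤ n) {c d : FacePoset n} (h : NC c) (hτ : tBar hn c ∉ c.1)
    (hd : d.1 = insert (tBar hn c) c.1) :
    NC d ∧ tmap d = tmap c ∧ tBar hn d = tBar hn c := by
  have hA : aPart c = aPart d := by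
    unfold aPart
    rw [hd, Finset.filter_insert, if_neg (tBar_not_blockSet hn h)]
  obtain ⟨_, _, hTst, hVst, homg, hNC, hfpred⟩ := flag_congr hA
  have hncd : NC d := hNC.1 h
  have hfp : ¬ fpred d (tBar hn c) := by
    rw [← hfpred]
    intro hfp
    exact hfp.2.2.2 (by rw [B0_tBar hn h])
  have hfSet : fSet d = fSet c := by
    unfold fSet
    rw [hd, Finset.filter_insert, if_neg hfp]
    apply Finset.filter_congr
    intro x _
    simp only [← hfpred, eq_iff_iff]
  have htm : tmap d = tmap c := tmap_congr hfSet homg.symm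
  refine ⟨hncd, htm, ?_⟩
  apply barpi_ext
  rw [tBar_val hn hncd, tBar_val hn h, htm]

/-- Erasing the toggle element does not change any of the structure. -/
theorem ers_transfer (hn : 3 ≤ n) {c d : FacePoset n} (h : NC d) (hτ : tBar hn d ∈ d.1)
    (hd : c.1 = d.1.erase (tBar hn d)) :
    NC c ∧ tmap c = tmap d ∧ tBar hn c = tBar hn d := by
  have hA : aPart c = aPart d := by
    unfold aPart
    rw [hd, Finset.filter_erase, Finset.erase_eq_of_notMem]
    rw [Finset.mem_filter]
    rintro ⟨_, hA⟩
    exact tBar_not_blockSet hn h hA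
  obtain ⟨_, _, hTst, hVst, homg, hNC, hfpred⟩ := flag_congr hA
  have hncc : NC c := hNC.2 h
  have hfp : ¬ fpred d (tBar hn d) := by
    intro hfp
    exact hfp.2.2.2 (by rw [B0_tBar hn h])
  have hfSet : fSet c = fSet d := by
    unfold fSet
    rw [hd]
    rw [Finset.filter_erase]
    rw [show Finset.filter (fpred c) d.1 = Finset.filter (fpred d) d.1 from
      Finset.filter_congr (fun x _ => by simp only [hfpred, eq_iff_iff])]
    rw [Finset.erase_eq_of_notMem]
    rw [Finset.mem_filter]
    rintro ⟨_, hf⟩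
    exact hfp hf
  have htm : tmap c = tmap d := tmap_congr hfSet homg
  refine ⟨hncc, htm, ?_⟩
  apply barpi_ext
  rw [tBar_val hn hncc, tBar_val hn h, htm]

/-! ### The matching -/

/-- The matching: pair each noncritical chain not containing its toggle element with
the chain obtained by inserting the toggle element. -/
def Match (hn : 3 ≤ n) : Set (FacePoset n × FacePoset n) :=
  {p | NC p.1 ∧ tBar hn p.1 ∉ p.1.1 ∧ p.2.1 = insert (tBar hn p.1) p.1.1}

theorem face_le_iff {a b : FacePoset n} : a ≤ b ↔ a.1 ⊆ b.1 := Iff.rfl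

theorem face_lt_iff {a b : FacePoset n} : a < b ↔ a.1 ⊂ b.1 := by
  rw [lt_iff_le_not_ge, Finset.ssubset_def]
  exact Iff.rfl

theorem face_ext {a b : FacePoset n} (h : a.1 = b.1) : a = b := Subtype.ext h

theorem covWithin_iff {a b : FacePoset n} :
    CovByWithin Set.univ a b ↔ a.1 ⊂ b.1 ∧ b.1.card = a.1.card + 1 := by
  constructor
  · rintro ⟨-, -, hlt, hmax⟩
    have hss : a.1 ⊂ b.1 := face_lt_iff.1 hlt
    refine ⟨hss, ?_⟩
    have h1 : a.1.card < b.1.card := Finset.card_lt_card hss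
    by_contra hcard
    have h2 : a.1.card + 2 ≤ b.1.card := by omega
    obtain ⟨x, hxb, hxa⟩ := Finset.exists_of_ssubset hss
    have hsub : insert x a.1 ⊆ b.1 := Finset.insert_subset hxb hss.1
    have hchain : IsChain (· ≤ ·) (↑(insert x a.1) : Set (BarPi n)) := by
      intro u hu v hv huv
      exact b.2.2 (hsub (Finset.mem_coe.1 hu)) (hsub (Finset.mem_coe.1 hv)) huv
    set e : FacePoset n := ⟨insert x a.1, Finset.insert_nonempty _ _, hchain⟩ with he
    have h3 : a < e := by
      rw [face_lt_iff]
      exact Finset.ssubset_insert hxa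
    have h4 : e < b := by
      rw [face_lt_iff]
      refine Finset.ssubset_iff_subset_ne.2 ⟨hsub, ?_⟩
      intro heq
      have hc2 : (insert x a.1).card = b.1.card := congrArg Finset.card heq
      rw [Finset.card_insert_of_notMem hxa] at hc2
      omega
    exact hmax e (Set.mem_univ e) h3 h4
  · rintro ⟨hss, hcard⟩
    refine ⟨Set.mem_univ a, Set.mem_univ b, face_lt_iff.2 hss, ?_⟩
    intro e _ hae heb
    have h1 : a.1.card < e.1.card := Finset.card_lt_card (face_lt_iff.1 hae)
    have h2 : e.1.card < b.1.card := Finset.card_lt_card (face_lt_iff.1 heb)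
    omega

theorem cov_erase {a b : FacePoset n} (h : CovByWithin Set.univ a b) :
    ∃ y ∈ b.1, y ∉ a.1 ∧ a.1 = b.1.erase y := by
  obtain ⟨hss, hcard⟩ := covWithin_iff.1 h
  have hc1 : (b.1 \ a.1).card = 1 := by
    rw [Finset.card_sdiff_of_subset hss.1]
    omega
  obtain ⟨y, hy⟩ := Finset.card_eq_one.1 hc1
  have hyb : y ∈ b.1 ∧ y ∉ a.1 := by
    have : y ∈ b.1 \ a.1 := hy ▸ Finset.mem_singleton_self y
    exact ⟨(Finset.mem_sdiff.1 this).1, (Finset.mem_sdiff.1 this).2⟩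
  refine ⟨y, hyb.1, hyb.2, ?_⟩
  ext z
  rw [Finset.mem_erase]
  constructor
  · intro hz
    refine ⟨?_, hss.1 hz⟩
    rintro rfl
    exact hyb.2 hz
  · rintro ⟨hzy, hzb⟩
    by_contra hza
    have : z ∈ b.1 \ a.1 := Finset.mem_sdiff.2 ⟨hzb, hza⟩
    rw [hy, Finset.mem_singleton] at this
    exact hzy this

theorem match_cov (hn : 3 ≤ n) {p : FacePoset n × FacePoset n} (hp : p ∈ Match hn) :
    CovByWithin Set.univ p.1 p.2 := by
  obtain ⟨h, hτ, hd⟩ := hp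
  rw [covWithin_iff, hd]
  exact ⟨Finset.ssubset_insert hτ, Finset.card_insert_of_notMem hτ⟩

theorem match_unique (hn : 3 ≤ n) : ∀ p ∈ Match hn, ∀ q ∈ Match hn,
    (p.1 = q.1 ∨ p.1 = q.2 ∨ p.2 = q.1 ∨ p.2 = q.2) → p = q := by
  rintro ⟨a, b⟩ ⟨h1, h2, h3⟩ ⟨a', b'⟩ ⟨h1', h2', h3'⟩ hor
  simp only at h2 h3 h2' h3' ⊢
  rcases hor with h | h | h | h
  · simp only at h
    subst h
    refine Prod.ext rfl (face_ext ?_)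
    rw [h3, h3']
  · -- a = b' : impossible
    simp only at h
    subst h
    obtain ⟨_, _, ht⟩ := ins_transfer hn h1' h2' h3'
    exfalso
    apply h2
    rw [ht, h3']
    exact Finset.mem_insert_self _ _
  · -- b = a' : impossible
    simp only at h
    obtain ⟨_, _, ht⟩ := ins_transfer hn h1 h2 (h ▸ h3)
    exfalso
    apply h2'
    have hmem : tBar hn a' ∈ b.1 := by
      rw [ht, h3]
      exact Finset.mem_insert_self _ _
    rwa [h] at hmem
  · -- b = b'
    simp only at h
    subst h
    obtain ⟨_, _, ht⟩ := ins_transfer hn h1 h2 h3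
    obtain ⟨_, _, ht'⟩ := ins_transfer hn h1' h2' h3'
    have hττ : tBar hn a = tBar hn a' := by rw [← ht, ← ht']
    have haa : a = a' := by
      apply face_ext
      have e1 : a.1 = b.1.erase (tBar hn a) := by
        rw [h3, Finset.erase_insert h2]
      have e2 : a'.1 = b.1.erase (tBar hn a') := by
        rw [h3', Finset.erase_insert h2']
      rw [e1, e2, hττ]
    subst haa
    exact rfl

/-! ### Criticality: counting -/

theorem card_inj_Bs {c : FacePoset n} {T T' : Finset (Fin n)} (hT : T ∈ Bs c)
    (hT' : T' ∈ Bs c) (h : T.card = T'.card) : T = T' := by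
  rcases Bs_chain T hT T' hT' with h' | h'
  · exact Finset.eq_of_subset_of_card_le h' h.ge
  · exact (Finset.eq_of_subset_of_card_le h' h.le).symm

theorem Bs_card_image {c : FacePoset n} : ((Bs c).image Finset.card).card = (Bs c).card :=
  Finset.card_image_of_injOn fun T hT T' hT' h => card_inj_Bs hT hT' h

theorem Bs_image_subset_Icc {c : FacePoset n} : (Bs c).image Finset.card ⊆ Finset.Icc 1 n := by
  intro m hm
  obtain ⟨T, hT, rfl⟩ := Finset.mem_image.1 hm
  rw [Finset.mem_Icc]
  constructor
  · exact Finset.card_pos.2 ⟨0, zero_mem_of_mem_Bs hT⟩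
  · calc T.card ≤ Finset.univ.card := Finset.card_le_univ T
      _ = n := Finset.card_fin n

theorem Bs_card_le (c : FacePoset n) : (Bs c).card ≤ n := by
  calc (Bs c).card = ((Bs c).image Finset.card).card := Bs_card_image.symm
    _ ≤ (Finset.Icc 1 n).card := Finset.card_le_card Bs_image_subset_Icc
    _ = n := by rw [Nat.card_Icc]; omega

theorem Bs_card_of_subA (hn : 3 ≤ n) {c : FacePoset n}
    (h : ∀ π ∈ c.1, π ∈ blockSet n) : (Bs c).card = c.1.card + 2 := by
  have hap : aPart c = c.1 := Finset.filter_true_of_mem h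
  have hinj : Set.InjOn B0 (↑c.1 : Set (BarPi n)) := by
    intro π hπ ρ hρ hB
    apply barpi_ext
    rw [blockSet_eq_blk (h π hπ), blockSet_eq_blk (h ρ hρ), hB]
  have himg : (c.1.image B0).card = c.1.card := Finset.card_image_of_injOn hinj
  have hone : (1 : ℕ) < n := by omega
  have h0u : ({0} : Finset (Fin n)) ≠ Finset.univ := by
    intro he
    have := congrArg Finset.card he
    rw [Finset.card_singleton, Finset.card_fin] at this
    omega
  have h0img : ({0} : Finset (Fin n)) ∉ c.1.image B0 := by
    intro hmem
    obtain ⟨π, hπ, hB⟩ := Finset.mem_image.1 hmem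
    have := B0_card_ge (h π hπ)
    rw [hB, Finset.card_singleton] at this
    omega
  have huimg : (Finset.univ : Finset (Fin n)) ∉ c.1.image B0 := by
    intro hmem
    obtain ⟨π, _, hB⟩ := Finset.mem_image.1 hmem
    exact B0_ne_univ π hB
  rw [Bs, hap]
  rw [Finset.card_insert_of_notMem (by
    rw [Finset.mem_insert]
    rintro (h' | h')
    · exact h0u h'
    · exact h0img h')]
  rw [Finset.card_insert_of_notMem huimg, himg]

/-- A chain in `Cn` has no candidates. -/
theorem not_NC_of_Cn (hn : 3 ≤ n) {c : FacePoset n} (hc : c ∈ Cn n) : ¬ NC c := by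
  obtain ⟨hsub, hcard⟩ := hc
  have hsub' : ∀ π ∈ c.1, π ∈ blockSet n := fun π hπ => hsub (Finset.mem_coe.2 hπ)
  have hBsc : (Bs c).card = n := by
    rw [Bs_card_of_subA hn hsub', hcard]
    omega
  have himg : (Bs c).image Finset.card = Finset.Icc 1 n := by
    apply Finset.eq_of_subset_of_card_le Bs_image_subset_Icc
    rw [Nat.card_Icc, Bs_card_image, hBsc]
    omega
  rintro ⟨T, hT⟩
  rw [cands, Finset.mem_filter] at hT
  obtain ⟨hTBs, x, y, hxy, ⟨hx1, hx2⟩, hy1, hy2⟩ := hT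
  have hTu : T ≠ Finset.univ := by
    rintro rfl
    exact hx2 (Finset.mem_univ x)
  obtain ⟨hVBs, hTV, hmin⟩ := nxt_spec (c := c) hTu
  set V := nxt c T with hV
  have hsd : 2 ≤ (V \ T).card := by
    have : ({x, y} : Finset (Fin n)) ⊆ V \ T := by
      intro z hz
      rcases Finset.mem_insert.1 hz with rfl | hz
      · exact Finset.mem_sdiff.2 ⟨hx1, hx2⟩
      · rw [Finset.mem_singleton] at hz
        exact hz ▸ Finset.mem_sdiff.2 ⟨hy1, hy2⟩
    calc 2 = ({x, y} : Finset (Fin n)).card := (Finset.card_pair hxy).symm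
      _ ≤ _ := Finset.card_le_card this
  have hV2 : T.card + 2 ≤ V.card := by
    have h1 := Finset.card_sdiff_of_subset hTV.1
    have h2 := Finset.card_le_card hTV.1
    omega
  have hT1 : T.card + 1 ∈ Finset.Icc 1 n := by
    rw [Finset.mem_Icc]
    have : T.card < n := by
      have := Finset.card_lt_card (Finset.ssubset_univ_iff.2 hTu)
      rwa [Finset.card_fin] at this
    omega
  rw [← himg] at hT1
  obtain ⟨W, hWBs, hW⟩ := Finset.mem_image.1 hT1
  have hTW : T ⊂ W := by
    rcases Bs_chain T hTBs W hWBs with h' | h'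
    · refine ssubset_of_subset_of_ne h' ?_
      intro he
      rw [he] at hW
      omega
    · exfalso
      have := Finset.card_le_card h'
      omega
  have := Finset.card_le_card (hmin W hWBs hTW)
  omega

/-- Conversely, a chain with no candidates lies in `Cn`. -/
theorem Cn_of_not_NC (hn : 3 ≤ n) {c : FacePoset n} (hc : ¬ NC c) : c ∈ Cn n := by
  rw [NC, Finset.nonempty_iff_ne_empty, not_not] at hc
  -- first: every element of the chain is in `A`
  have hsub : ∀ π ∈ c.1, π ∈ blockSet n := by
    intro π hπ
    by_contra hA
    obtain ⟨x₀, y₀, hxy, hxB, hyB, hne⟩ := not_blockSet_iff.1 hA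
    set F := (Bs c).filter (· ⊆ B0 π) with hF
    have hFne : F.Nonempty := ⟨{0}, by
      rw [hF, Finset.mem_filter]
      refine ⟨singleton_zero_mem_Bs c, ?_⟩
      intro z hz
      rw [Finset.mem_singleton] at hz
      exact hz ▸ zero_mem_B0 π⟩
    obtain ⟨T, hTF, hTmax⟩ := finset_chain_max F hFne (by
      intro a ha b hb
      rw [hF, Finset.mem_filter] at ha hb
      exact Bs_chain a ha.1 b hb.1)
    rw [hF, Finset.mem_filter] at hTF
    obtain ⟨hTBs, hTB0⟩ := hTF
    have hTu : T ≠ Finset.univ := by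
      rintro rfl
      exact B0_ne_univ π (Finset.univ_subset_iff.1 hTB0)
    obtain ⟨hVBs, hTV, hmin⟩ := nxt_spec (c := c) hTu
    set V := nxt c T with hV
    have hxT : x₀ ∉ T := fun h => hxB (hTB0 h)
    have hyT : y₀ ∉ T := fun h => hyB (hTB0 h)
    have hxyV : x₀ ∈ V ∧ y₀ ∈ V := by
      rcases mem_Bs.1 hVBs with h' | h' | ⟨ρ, hρc, hρA, hB⟩
      · exfalso
        have h0T : 0 ∈ T := zero_mem_of_mem_Bs hTBs
        have hTV' : T ⊂ ({0} : Finset (Fin n)) := by rw [← h']; exact hTV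
        have : T = ∅ := Finset.ssubset_singleton_iff.1 hTV'
        rw [this] at h0T
        exact Finset.notMem_empty _ h0T
      · rw [h']
        exact ⟨Finset.mem_univ _, Finset.mem_univ _⟩
      · rcases chain_mem_comparable hπ hρc with h' | h'
        · have := setoid_le_iff.1 (barpi_le_iff.1 h') x₀ y₀ hxy
          obtain ⟨ha, hb⟩ := blockSet_pair hρA this hne
          rw [hB] at ha hb
          exact ⟨ha, hb⟩
        · exfalso
          have hBB : B0 ρ ⊆ B0 π := B0_mono h'
          have : B0 ρ ∈ F := by
            rw [hF, Finset.mem_filter]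
            exact ⟨mem_Bs.2 (Or.inr (Or.inr ⟨ρ, hρc, hρA, rfl⟩)), hBB⟩
          rw [hB] at this
          exact hTV.2 (hTmax _ this)
    have : T ∈ cands c := by
      rw [cands, Finset.mem_filter]
      exact ⟨hTBs, x₀, y₀, hne, ⟨hxyV.1, hxT⟩, hxyV.2, hyT⟩
    rw [hc] at this
    exact Finset.notMem_empty _ this
  -- all jumps are one
  have hjump : ∀ T ∈ Bs c, T ≠ Finset.univ → (nxt c T).card = T.card + 1 := by
    intro T hTBs hTu
    obtain ⟨hVBs, hTV, _⟩ := nxt_spec (c := c) hTu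
    have h1 : (nxt c T \ T).card ≤ 1 := by
      by_contra h2
      push_neg at h2
      obtain ⟨x, hx, y, hy, hxy⟩ := Finset.one_lt_card.1 h2
      rw [Finset.mem_sdiff] at hx hy
      have : T ∈ cands c := by
        rw [cands, Finset.mem_filter]
        exact ⟨hTBs, x, y, hxy, ⟨hx.1, hx.2⟩, hy.1, hy.2⟩
      rw [hc] at this
      exact Finset.notMem_empty _ this
    have h2 : 1 ≤ (nxt c T \ T).card := by
      obtain ⟨x, hx1, hx2⟩ := Finset.exists_of_ssubset hTV
      exact Finset.card_pos.2 ⟨x, Finset.mem_sdiff.2 ⟨hx1, hx2⟩⟩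
    have h3 := Finset.card_sdiff_of_subset hTV.1
    have h4 := Finset.card_le_card hTV.1
    omega
  -- every size between 1 and n is attained
  have hattain : ∀ m : ℕ, 1 ≤ m → m ≤ n → ∃ T ∈ Bs c, T.card = m := by
    intro m
    induction m with
    | zero => omega
    | succ m ih =>
      intro _ hmn
      by_cases hm : m = 0
      · subst hm
        exact ⟨{0}, singleton_zero_mem_Bs c, Finset.card_singleton 0⟩
      · obtain ⟨T, hTBs, hTcard⟩ := ih (by omega) (by omega)
        have hTu : T ≠ Finset.univ := by
          rintro rfl
          rw [Finset.card_fin] at hTcard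
          omega
        obtain ⟨hVBs, _, _⟩ := nxt_spec (c := c) hTu
        exact ⟨nxt c T, hVBs, by rw [hjump T hTBs hTu, hTcard]⟩
  have hBsge : n ≤ (Bs c).card := by
    have hsub2 : Finset.Icc 1 n ⊆ (Bs c).image Finset.card := by
      intro m hm
      rw [Finset.mem_Icc] at hm
      obtain ⟨T, hT, hTc⟩ := hattain m hm.1 hm.2
      exact Finset.mem_image.2 ⟨T, hT, hTc⟩
    calc n = (Finset.Icc 1 n).card := by rw [Nat.card_Icc]; omega
      _ ≤ ((Bs c).image Finset.card).card := Finset.card_le_card hsub2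
      _ = (Bs c).card := Bs_card_image
  have hBseq := Bs_card_of_subA hn hsub
  have hBsle := Bs_card_le c
  refine ⟨fun π hπ => hsub π (Finset.mem_coe.1 hπ), ?_⟩
  omega

/-! ### The singleton critical cell -/

theorem fin1_ne_zero (hn : 3 ≤ n) : (⟨1, by omega⟩ : Fin n) ≠ 0 := by
  intro h
  have := congrArg Fin.val h
  simp [Fin.val_zero] at this

theorem fin2_ne_zero (hn : 3 ≤ n) : (⟨2, by omega⟩ : Fin n) ≠ 0 := by
  intro h
  have := congrArg Fin.val h
  simp [Fin.val_zero] at this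

theorem fin12_ne (hn : 3 ≤ n) : (⟨1, by omega⟩ : Fin n) ≠ ⟨2, by omega⟩ := by
  intro h
  have := congrArg Fin.val h
  simp at this

theorem alphaBar_not_blockSet (hn : 3 ≤ n) : alphaBar n hn ∉ blockSet n := by
  rw [mem_blockSet_iff]
  push_neg
  refine ⟨⟨1, by omega⟩, ⟨2, by omega⟩, ?_, ?_, fin12_ne hn⟩
  · exact Or.inr ⟨fin1_ne_zero hn, fin2_ne_zero hn⟩
  · rintro (h | ⟨h, h0⟩)
    · exact fin1_ne_zero hn h
    · exact h0 rfl

theorem B0_alphaBar (hn : 3 ≤ n) : B0 (alphaBar n hn) = {0} := by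
  ext x
  rw [mem_B0, Finset.mem_singleton]
  constructor
  · rintro (h | ⟨_, h0⟩)
    · exact h
    · exact absurd rfl h0
  · rintro rfl
    exact Or.inl rfl

theorem blk2_zero_univ (hn : 3 ≤ n) :
    blk2 ({0} : Finset (Fin n)) Finset.univ = alphaSetoid n := by
  apply Setoid.ext
  intro x y
  show (x = y ∨ (x ∈ ({0} : Finset (Fin n)) ∧ y ∈ ({0} : Finset (Fin n))) ∨
      (x ∈ Finset.univ ∧ x ∉ ({0} : Finset (Fin n)) ∧ y ∈ Finset.univ ∧
        y ∉ ({0} : Finset (Fin n)))) ↔ (x = y ∨ (x ≠ 0 ∧ y ≠ 0))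
  simp only [Finset.mem_singleton, Finset.mem_univ, true_and]
  constructor
  · rintro (h | ⟨h1, h2⟩ | ⟨h1, h2⟩)
    · exact Or.inl h
    · exact Or.inl (h1.trans h2.symm)
    · exact Or.inr ⟨h1, h2⟩
  · rintro (h | ⟨h1, h2⟩)
    · exact Or.inl h
    · exact Or.inr (Or.inr ⟨h1, h2⟩)

theorem sing_flag (hn : 3 ≤ n) {x : FacePoset n} {π : BarPi n} (hx : x.1 = {π})
    (hπA : π ∉ blockSet n) :
    NC x ∧ Tst x = {0} ∧ Vst x = Finset.univ := by
  have h0u : ({0} : Finset (Fin n)) ≠ Finset.univ := by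
    intro he
    have := congrArg Finset.card he
    rw [Finset.card_singleton, Finset.card_fin] at this
    omega
  have hBs : ∀ T, T ∈ Bs x ↔ (T = {0} ∨ T = Finset.univ) := by
    intro T
    rw [mem_Bs]
    constructor
    · rintro (h | h | ⟨ρ, hρ, hρA, _⟩)
      · exact Or.inl h
      · exact Or.inr h
      · rw [hx, Finset.mem_singleton] at hρ
        exact absurd (hρ ▸ hρA) hπA
    · rintro (h | h)
      · exact Or.inl h
      · exact Or.inr (Or.inl h)
  have hnx : nxt x {0} = Finset.univ := by
    obtain ⟨h1, h2, _⟩ := nxt_spec (c := x) h0u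
    rcases (hBs _).1 h1 with h | h
    · exfalso
      rw [h] at h2
      exact h2.2 subset_rfl
    · exact h
  have h0cand : ({0} : Finset (Fin n)) ∈ cands x := by
    rw [cands, Finset.mem_filter]
    refine ⟨(hBs _).2 (Or.inl rfl), ⟨1, by omega⟩, ⟨2, by omega⟩, fin12_ne hn, ?_, ?_⟩
    · rw [hnx]
      exact ⟨Finset.mem_univ _, by rw [Finset.mem_singleton]; exact fin1_ne_zero hn⟩
    · rw [hnx]
      exact ⟨Finset.mem_univ _, by rw [Finset.mem_singleton]; exact fin2_ne_zero hn⟩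
  have hNC : NC x := ⟨{0}, h0cand⟩
  have hTst : Tst x = {0} := by
    rcases (hBs _).1 (Tst_mem_Bs hNC) with h | h
    · exact h
    · exact absurd h (Tst_ne_univ hNC)
  have hVst : Vst x = Finset.univ := by
    rw [Vst, hTst, hnx]
  exact ⟨hNC, hTst, hVst⟩

theorem sing_tmap (hn : 3 ≤ n) {x : FacePoset n} {π : BarPi n} (hx : x.1 = {π})
    (hπA : π ∉ blockSet n) (hB0 : B0 π ⊆ {0}) : tmap x = alphaSetoid n := by
  obtain ⟨hNC, hTst, hVst⟩ := sing_flag hn hx hπA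
  have hfs : fSet x = ∅ := by
    apply Finset.eq_empty_of_forall_notMem
    intro z hz
    obtain ⟨hz1, hz2⟩ := mem_fSet.1 hz
    rw [hx, Finset.mem_singleton] at hz1
    subst hz1
    exact hz2.2.2.2 (hTst ▸ hB0)
  rw [tmap_of_empty hfs, omg, hTst, hVst, blk2_zero_univ hn]

theorem alphaChain_props (hn : 3 ≤ n) :
    NC (alphaChain n hn) ∧ tBar hn (alphaChain n hn) = alphaBar n hn := by
  have hx : (alphaChain n hn).1 = {alphaBar n hn} := rfl
  have hNC := (sing_flag hn hx (alphaBar_not_blockSet hn)).1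
  refine ⟨hNC, barpi_ext ?_⟩
  rw [tBar_val hn hNC, sing_tmap hn hx (alphaBar_not_blockSet hn) (by
    rw [B0_alphaBar hn])]
  rfl

theorem singleton_toggle (hn : 3 ≤ n) {x : FacePoset n} (h : NC x)
    (hx : x.1 = {tBar hn x}) : x = alphaChain n hn := by
  have hτA := tBar_not_blockSet hn h
  obtain ⟨_, hTst, _⟩ := sing_flag hn hx hτA
  have hB0 : B0 (tBar hn x) ⊆ {0} := by
    rw [B0_tBar hn h, hTst]
  have htm := sing_tmap hn hx hτA hB0
  have hτ : tBar hn x = alphaBar n hn := by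
    apply barpi_ext
    rw [tBar_val hn h, htm]
    rfl
  apply face_ext
  rw [hx, hτ]
  rfl

/-! ### The critical set -/

theorem crit_eq (hn : 3 ≤ n) :
    criticalSet Set.univ (Match hn) = Cn n ∪ {alphaChain n hn} := by
  ext x
  simp only [criticalSet, Set.mem_setOf_eq, Set.mem_univ, true_and, Set.mem_union,
    Set.mem_singleton_iff]
  constructor
  · intro hcrit
    by_cases hNC : NC x
    · right
      have hτ : tBar hn x ∈ x.1 := by
        by_contra hτ
        have hp : (x, chainIns hn x hNC) ∈ Match hn := ⟨hNC, hτ, rfl⟩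
        exact (hcrit _ hp).1 rfl
      by_cases hsing : x.1 = {tBar hn x}
      · exact singleton_toggle hn hNC hsing
      · exfalso
        have hne : (x.1.erase (tBar hn x)).Nonempty := by
          obtain ⟨z, hz, hzτ⟩ : ∃ z ∈ x.1, z ≠ tBar hn x := by
            by_contra hno
            push_neg at hno
            apply hsing
            apply Finset.eq_singleton_iff_unique_mem.2
            exact ⟨hτ, hno⟩
          exact ⟨z, Finset.mem_erase.2 ⟨hzτ, hz⟩⟩
        have hchain : IsChain (· ≤ ·) (↑(x.1.erase (tBar hn x)) : Set (BarPi n)) := by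
          intro u hu v hv huv
          rw [Finset.mem_coe, Finset.mem_erase] at hu hv
          exact x.2.2 (Finset.mem_coe.2 hu.2) (Finset.mem_coe.2 hv.2) huv
        set a : FacePoset n := ⟨x.1.erase (tBar hn x), hne, hchain⟩ with ha
        obtain ⟨hNCa, _, hτa⟩ := ers_transfer hn hNC hτ (show a.1 = _ from rfl)
        have hp : (a, x) ∈ Match hn := by
          refine ⟨hNCa, ?_, ?_⟩
          · rw [hτa]
            exact Finset.notMem_erase _ _
          · rw [hτa]
            show x.1 = insert (tBar hn x) (x.1.erase (tBar hn x))
            rw [Finset.insert_erase hτ]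
        exact (hcrit _ hp).2 rfl
    · left
      exact Cn_of_not_NC hn hNC
  · intro h p hp
    obtain ⟨hNC1, hτ1, hins⟩ := hp
    rcases h with hCn | rfl
    · have hxNC : ¬ NC x := not_NC_of_Cn hn hCn
      constructor
      · rintro rfl
        exact hxNC hNC1
      · rintro rfl
        obtain ⟨hNCd, _, _⟩ := ins_transfer hn hNC1 hτ1 hins
        exact hxNC hNCd
    · obtain ⟨hNCα, hτα⟩ := alphaChain_props hn
      constructor
      · intro he
        rw [he] at hτ1
        rw [hτα] at hτ1
        exact hτ1 (Finset.mem_singleton_self _)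
      · intro he
        rw [he] at hins
        have hc := congrArg Finset.card hins
        rw [Finset.card_insert_of_notMem hτ1] at hc
        have h1 : (alphaChain n hn).1.card = 1 := Finset.card_singleton _
        have h2 : 1 ≤ p.1.1.card := Finset.card_pos.2 p.1.2.1
        omega

/-! ### Acyclicity -/

/-- The predicate defining the "outside the chosen gap" part. -/
def opred (c : FacePoset n) (π : BarPi n) : Prop :=
  π ∉ blockSet n ∧ ¬(blk (Tst c) ≤ π.1 ∧ π.1 ≤ blk (Vst c))

def oSet (c : FacePoset n) : Finset (BarPi n) := c.1.filter (opred c)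

/-- The lexicographic measure used to rule out cycles. -/
def measT (c : FacePoset n) : ℕ ×ₗ (ℕ ×ₗ ℕ) :=
  toLex ((aPart c).card, toLex ((oSet c).card, (fSet c).card))

theorem measT_lt_iff {c d : FacePoset n} : measT c < measT d ↔
    (aPart c).card < (aPart d).card ∨
      ((aPart c).card = (aPart d).card ∧
        ((oSet c).card < (oSet d).card ∨
          ((oSet c).card = (oSet d).card ∧ (fSet c).card < (fSet d).card))) := by
  rw [measT, measT, Prod.Lex.lt_iff]
  constructor
  · rintro (h | ⟨h1, h2⟩)
    · exact Or.inl h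
    · rw [Prod.Lex.lt_iff] at h2
      exact Or.inr ⟨h1, h2⟩
  · rintro (h | ⟨h1, h2⟩)
    · exact Or.inl h
    · exact Or.inr ⟨h1, Prod.Lex.lt_iff.2 h2⟩

theorem not_fpred_tBar (hn : 3 ≤ n) {a : FacePoset n} (h : NC a) :
    ¬ fpred a (tBar hn a) := by
  intro hf
  exact hf.2.2.2 (by rw [B0_tBar hn h])

theorem not_opred_tBar (hn : 3 ≤ n) {a : FacePoset n} (h : NC a) :
    ¬ opred a (tBar hn a) := by
  intro ho
  exact ho.2 ⟨by rw [tBar_val hn h]; exact blk_Tst_le_tmap h,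
    by rw [tBar_val hn h]; exact tmap_le_blk_Vst h⟩

/-- The key step: moving along the cycle strictly decreases the measure
(or is impossible outright). -/
theorem step (hn : 3 ≤ n) {a b a' : FacePoset n} (hab : (a, b) ∈ Match hn)
    (hne : a' ≠ a) (hcov : CovByWithin Set.univ a' b)
    (ha' : NC a' ∧ tBar hn a' ∉ a'.1) : measT a' < measT a := by
  obtain ⟨hNCa, hτa, hb⟩ := hab
  obtain ⟨y, hyb, hya', hery⟩ := cov_erase hcov
  have hyτ : y ≠ tBar hn a := by
    rintro rfl
    apply hne
    apply face_ext
    rw [hery, hb, Finset.erase_insert hτa]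
  have hya : y ∈ a.1 := by
    rw [hb] at hyb
    rcases Finset.mem_insert.1 hyb with h | h
    · exact absurd h hyτ
    · exact h
  have ha'1 : a'.1 = insert (tBar hn a) (a.1.erase y) := by
    rw [hery, hb, Finset.erase_insert_of_ne hyτ.symm]
  by_cases hyA : y ∈ blockSet n
  · -- the erased element is in `A`: the first component decreases
    rw [measT_lt_iff]
    left
    have : aPart a' = (aPart a).erase y := by
      unfold aPart
      rw [ha'1, Finset.filter_insert, if_neg (tBar_not_blockSet hn hNCa),
        Finset.filter_erase]
    rw [this]
    apply Finset.card_erase_lt_of_mem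
    exact Finset.mem_filter.2 ⟨hya, hyA⟩
  · -- the erased element is not in `A`: flags agree
    have haP : aPart a' = aPart a := by
      unfold aPart
      rw [ha'1, Finset.filter_insert, if_neg (tBar_not_blockSet hn hNCa),
        Finset.filter_erase, Finset.erase_eq_of_notMem (fun hh => hyA (Finset.mem_filter.1 hh).2)]
    obtain ⟨_, _, hTst, hVst, homg, hNCiff, hfpred⟩ := flag_congr haP
    have hopred : ∀ π, opred a' π ↔ opred a π := by
      intro π
      rw [opred, opred, hTst, hVst]
    by_cases hyo : opred a y
    · -- outside-gap element erased: second component decreases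
      rw [measT_lt_iff]
      right
      refine ⟨by rw [haP], Or.inl ?_⟩
      have : oSet a' = (oSet a).erase y := by
        unfold oSet
        rw [ha'1, Finset.filter_insert,
          if_neg (by rw [hopred]; exact not_opred_tBar hn hNCa),
          Finset.filter_erase,
          show Finset.filter (opred a') a.1 = Finset.filter (opred a) a.1 from
            Finset.filter_congr fun π _ => by simp only [hopred]]
      rw [this]
      apply Finset.card_erase_lt_of_mem
      exact Finset.mem_filter.2 ⟨hya, hyo⟩
    · have hoSet : oSet a' = oSet a := by
        unfold oSet
        rw [ha'1, Finset.filter_insert,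
          if_neg (by rw [hopred]; exact not_opred_tBar hn hNCa),
          Finset.filter_erase,
          show Finset.filter (opred a') a.1 = Finset.filter (opred a) a.1 from
            Finset.filter_congr fun π _ => by simp only [hopred],
          Finset.erase_eq_of_notMem (fun hh => hyo (Finset.mem_filter.1 hh).2)]
      by_cases hyf : fpred a y
      · -- gap `f`-element erased: third component decreases
        rw [measT_lt_iff]
        right
        refine ⟨by rw [haP], Or.inr ⟨by rw [hoSet], ?_⟩⟩
        have : fSet a' = (fSet a).erase y := by
          unfold fSet
          rw [ha'1, Finset.filter_insert,
            if_neg (by rw [hfpred]; exact not_fpred_tBar hn hNCa),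
            Finset.filter_erase,
            show Finset.filter (fpred a') a.1 = Finset.filter (fpred a) a.1 from
              Finset.filter_congr fun π _ => by simp only [hfpred]]
        rw [this]
        apply Finset.card_erase_lt_of_mem
        exact Finset.mem_filter.2 ⟨hya, hyf⟩
      · -- `h`-element erased: the toggle is unchanged, contradiction
        exfalso
        have hfSet : fSet a' = fSet a := by
          unfold fSet
          rw [ha'1, Finset.filter_insert,
            if_neg (by rw [hfpred]; exact not_fpred_tBar hn hNCa),
            Finset.filter_erase,
            show Finset.filter (fpred a') a.1 = Finset.filter (fpred a) a.1 from
              Finset.filter_congr fun π _ => by simp only [hfpred],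
            Finset.erase_eq_of_notMem (fun hh => hyf (Finset.mem_filter.1 hh).2)]
        have htm : tmap a' = tmap a := tmap_congr hfSet homg
        have hNCa' : NC a' := ha'.1
        have hττ : tBar hn a' = tBar hn a := by
          apply barpi_ext
          rw [tBar_val hn hNCa', tBar_val hn hNCa, htm]
        apply ha'.2
        rw [hττ, ha'1]
        exact Finset.mem_insert_self _ _

theorem match_acyclic (hn : 3 ≤ n) :
    ¬∃ (k : ℕ) (a b : ZMod k → FacePoset n), 2 ≤ k ∧ Function.Injective a ∧
      ∀ i : ZMod k, (a i, b i) ∈ Match hn ∧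
        CovByWithin Set.univ (a (i + 1)) (b i) := by
  rintro ⟨k, a, b, hk, hinj, hcyc⟩
  haveI : NeZero k := ⟨by omega⟩
  haveI : Fact (1 < k) := ⟨hk⟩
  have hne : ∀ i : ZMod k, a (i + 1) ≠ a i := by
    intro i h
    have h2 : i + 1 = i := hinj h
    have h3 : i + 1 = i + 0 := by rw [add_zero]; exact h2
    exact one_ne_zero (add_left_cancel h3)
  have hdec : ∀ i : ZMod k, measT (a (i + 1)) < measT (a i) := by
    intro i
    obtain ⟨hab, hcov⟩ := hcyc i
    obtain ⟨hab', _⟩ := hcyc (i + 1)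
    exact step hn hab (hne i) hcov ⟨hab'.1, hab'.2.1⟩
  obtain ⟨i0, -, hmin⟩ := Finset.exists_min_image (Finset.univ : Finset (ZMod k))
    (fun i => measT (a i)) ⟨0, Finset.mem_univ 0⟩
  exact absurd (hdec i0) (not_lt.2 (hmin (i0 + 1) (Finset.mem_univ _)))

/-! ### Equivariance -/

theorem perm_inv_zero (g : Equiv.Perm (Fin n)) (hg : g 0 = 0) : g⁻¹ 0 = 0 := by
  conv_lhs => rw [← hg]
  exact g.symm_apply_apply 0

theorem smul_barpi_val (g : Equiv.Perm (Fin n)) (π : BarPi n) :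
    (g • π).1 = g • π.1 := rfl

theorem smul_face_val (g : Equiv.Perm (Fin n)) (c : FacePoset n) :
    (g • c).1 = c.1.image (fun ρ => g • ρ) := rfl

theorem smul_barpi_rel (g : Equiv.Perm (Fin n)) (π : BarPi n) (x y : Fin n) :
    (g • π).1 x y ↔ π.1 (g⁻¹ x) (g⁻¹ y) := Iff.rfl

theorem mem_image_perm (g : Equiv.Perm (Fin n)) {T : Finset (Fin n)} {x : Fin n} :
    x ∈ T.image ⇑g ↔ g⁻¹ x ∈ T := by
  rw [Finset.mem_image]
  constructor
  · rintro ⟨y, hy, rfl⟩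
    rwa [Equiv.Perm.coe_inv, Equiv.symm_apply_apply]
  · intro h
    exact ⟨g⁻¹ x, h, g.apply_symm_apply x⟩

theorem image_univ_perm (g : Equiv.Perm (Fin n)) :
    Finset.univ.image ⇑g = Finset.univ := by
  ext x
  simp only [Finset.mem_univ, iff_true]
  exact mem_image_perm g |>.2 (Finset.mem_univ _)

theorem image_subset_iff_perm (g : Equiv.Perm (Fin n)) {T U : Finset (Fin n)} :
    T.image ⇑g ⊆ U.image ⇑g ↔ T ⊆ U :=
  Finset.image_subset_image_iff g.injective

theorem image_ssubset_iff_perm (g : Equiv.Perm (Fin n)) {T U : Finset (Fin n)} :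
    T.image ⇑g ⊂ U.image ⇑g ↔ T ⊂ U := by
  rw [Finset.ssubset_def, Finset.ssubset_def, image_subset_iff_perm, image_subset_iff_perm]

theorem smul_setoid_le_iff (g : Equiv.Perm (Fin n)) {s t : Setoid (Fin n)} :
    g • s ≤ g • t ↔ s ≤ t := by
  constructor
  · intro h
    have := perm_smul_mono n g⁻¹ h
    simpa only [inv_smul_smul] using this
  · exact fun h => perm_smul_mono n g h

theorem B0_smul (g : Equiv.Perm (Fin n)) (hg : g 0 = 0) (π : BarPi n) :
    B0 (g • π) = (B0 π).image ⇑g := by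
  ext x
  rw [mem_image_perm, mem_B0, mem_B0, smul_barpi_rel, perm_inv_zero g hg]

theorem blockSet_smul_of (g : Equiv.Perm (Fin n)) (hg : g 0 = 0) {π : BarPi n}
    (h : π ∈ blockSet n) : g • π ∈ blockSet n := by
  intro x y hxy
  rw [smul_barpi_rel] at hxy
  rcases h _ _ hxy with h' | h'
  · left
    rw [smul_barpi_rel, perm_inv_zero g hg]
    exact h'
  · right
    have := congrArg g h'
    rwa [Equiv.Perm.coe_inv, g.apply_symm_apply, g.apply_symm_apply] at this

theorem blockSet_smul_iff (g : Equiv.Perm (Fin n)) (hg : g 0 = 0) (π : BarPi n) :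
    g • π ∈ blockSet n ↔ π ∈ blockSet n := by
  constructor
  · intro h
    have := blockSet_smul_of g⁻¹ (perm_inv_zero g hg) h
    rwa [inv_smul_smul] at this
  · exact blockSet_smul_of g hg

theorem aPart_smul (g : Equiv.Perm (Fin n)) (hg : g 0 = 0) (c : FacePoset n) :
    aPart (g • c) = (aPart c).image (fun ρ => g • ρ) := by
  ext π
  simp only [aPart, Finset.mem_filter, smul_face_val, Finset.mem_image]
  constructor
  · rintro ⟨⟨ρ, hρ, rfl⟩, hA⟩
    exact ⟨ρ, ⟨hρ, (blockSet_smul_iff g hg ρ).1 hA⟩, rfl⟩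
  · rintro ⟨ρ, ⟨hρc, hρA⟩, rfl⟩
    exact ⟨⟨ρ, hρc, rfl⟩, (blockSet_smul_iff g hg ρ).2 hρA⟩

theorem Bs_smul (g : Equiv.Perm (Fin n)) (hg : g 0 = 0) (c : FacePoset n) :
    Bs (g • c) = (Bs c).image (fun T => T.image ⇑g) := by
  unfold Bs
  rw [aPart_smul g hg, Finset.image_insert, Finset.image_insert, Finset.image_image,
    Finset.image_image]
  congr 1
  · rw [Finset.image_singleton, hg]
  congr 1
  · exact (image_univ_perm g).symm
  · apply Finset.image_congr
    intro ρ hρ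
    show B0 (g • ρ) = (B0 ρ).image ⇑g
    exact B0_smul g hg ρ

theorem inf_image_perm (g : Equiv.Perm (Fin n)) (F : Finset (Finset (Fin n))) :
    (F.image (fun T => T.image ⇑g)).inf id = (F.inf id).image ⇑g := by
  induction F using Finset.induction_on with
  | empty =>
    simp only [Finset.image_empty, Finset.inf_empty]
    exact (image_univ_perm g).symm
  | insert _ _ hx ih =>
    rw [Finset.image_insert, Finset.inf_insert, Finset.inf_insert, ih]
    show _ ⊓ _ = _
    rw [id, id]
    rw [show ∀ (A B : Finset (Fin n)), A ⊓ B = A ∩ B from fun _ _ => rfl]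
    rw [show ∀ (A B : Finset (Fin n)), A ⊓ B = A ∩ B from fun _ _ => rfl]
    exact (Finset.image_inter _ _ g.injective).symm

theorem sup_image_perm (g : Equiv.Perm (Fin n)) (F : Finset (Finset (Fin n))) :
    (F.image (fun T => T.image ⇑g)).sup id = (F.sup id).image ⇑g := by
  induction F using Finset.induction_on with
  | empty =>
    simp only [Finset.image_empty, Finset.sup_empty]
    rfl
  | insert _ _ hx ih =>
    rw [Finset.image_insert, Finset.sup_insert, Finset.sup_insert, ih]
    show _ ⊔ _ = _
    rw [id, id]
    rw [show ∀ (A B : Finset (Fin n)), A ⊔ B = A ∪ B from fun _ _ => rfl]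
    rw [show ∀ (A B : Finset (Fin n)), A ⊔ B = A ∪ B from fun _ _ => rfl]
    exact (Finset.image_union _ _).symm

theorem nxt_smul (g : Equiv.Perm (Fin n)) (hg : g 0 = 0) (c : FacePoset n)
    (T : Finset (Fin n)) : nxt (g • c) (T.image ⇑g) = (nxt c T).image ⇑g := by
  unfold nxt
  rw [← inf_image_perm g]
  congr 1
  rw [Bs_smul g hg]
  ext W
  simp only [Finset.mem_image, Finset.mem_filter]
  constructor
  · rintro ⟨⟨U, hU, rfl⟩, hTW⟩
    exact ⟨U, ⟨hU, (image_ssubset_iff_perm g).1 hTW⟩, rfl⟩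
  · rintro ⟨U, ⟨hU1, hU2⟩, rfl⟩
    exact ⟨⟨U, hU1, rfl⟩, (image_ssubset_iff_perm g).2 hU2⟩

theorem twoGap_smul (g : Equiv.Perm (Fin n)) (hg : g 0 = 0) (c : FacePoset n)
    (T : Finset (Fin n)) : twoGap (g • c) (T.image ⇑g) ↔ twoGap c T := by
  unfold twoGap
  rw [nxt_smul g hg]
  constructor
  · rintro ⟨x, y, hxy, ⟨hx1, hx2⟩, hy1, hy2⟩
    refine ⟨g⁻¹ x, g⁻¹ y, fun h => hxy (g⁻¹.injective h),
      ⟨?_, ?_⟩, ?_, ?_⟩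
    · exact (mem_image_perm g).1 hx1
    · intro h; exact hx2 ((mem_image_perm g).2 h)
    · exact (mem_image_perm g).1 hy1
    · intro h; exact hy2 ((mem_image_perm g).2 h)
  · rintro ⟨x, y, hxy, ⟨hx1, hx2⟩, hy1, hy2⟩
    refine ⟨g x, g y, fun h => hxy (g.injective h), ⟨?_, ?_⟩, ?_, ?_⟩
    · exact Finset.mem_image.2 ⟨x, hx1, rfl⟩
    · intro h
      obtain ⟨z, hz, hzx⟩ := Finset.mem_image.1 h
      exact hx2 (g.injective hzx ▸ hz)
    · exact Finset.mem_image.2 ⟨y, hy1, rfl⟩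
    · intro h
      obtain ⟨z, hz, hzy⟩ := Finset.mem_image.1 h
      exact hy2 (g.injective hzy ▸ hz)

theorem cands_smul (g : Equiv.Perm (Fin n)) (hg : g 0 = 0) (c : FacePoset n) :
    cands (g • c) = (cands c).image (fun T => T.image ⇑g) := by
  unfold cands
  rw [Bs_smul g hg]
  ext W
  simp only [Finset.mem_filter, Finset.mem_image]
  constructor
  · rintro ⟨⟨U, hU, rfl⟩, htg⟩
    exact ⟨U, ⟨hU, (twoGap_smul g hg c U).1 htg⟩, rfl⟩
  · rintro ⟨U, ⟨hU1, hU2⟩, rfl⟩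
    exact ⟨⟨U, hU1, rfl⟩, (twoGap_smul g hg c U).2 hU2⟩

theorem NC_smul (g : Equiv.Perm (Fin n)) (hg : g 0 = 0) (c : FacePoset n) :
    NC (g • c) ↔ NC c := by
  unfold NC
  rw [cands_smul g hg]
  exact Finset.image_nonempty

theorem Tst_smul (g : Equiv.Perm (Fin n)) (hg : g 0 = 0) (c : FacePoset n) :
    Tst (g • c) = (Tst c).image ⇑g := by
  unfold Tst
  rw [cands_smul g hg, sup_image_perm g]

theorem Vst_smul (g : Equiv.Perm (Fin n)) (hg : g 0 = 0) (c : FacePoset n) :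
    Vst (g • c) = (Vst c).image ⇑g := by
  unfold Vst
  rw [Tst_smul g hg, nxt_smul g hg]

theorem blk_smul (g : Equiv.Perm (Fin n)) (T : Finset (Fin n)) :
    blk (T.image ⇑g) = g • blk T := by
  apply Setoid.ext
  intro x y
  rw [show ⇑(g • blk T) = fun x y => blk T (g⁻¹ x) (g⁻¹ y) from rfl]
  show (x = y ∨ _) ↔ (g⁻¹ x = g⁻¹ y ∨ _)
  rw [mem_image_perm, mem_image_perm]
  constructor
  · rintro (rfl | h)
    · exact Or.inl rfl
    · exact Or.inr h
  · rintro (h | h)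
    · left
      have := congrArg g h
      rwa [Equiv.Perm.coe_inv, g.apply_symm_apply, g.apply_symm_apply] at this
    · exact Or.inr h

theorem blk2_smul (g : Equiv.Perm (Fin n)) (T V : Finset (Fin n)) :
    blk2 (T.image ⇑g) (V.image ⇑g) = g • blk2 T V := by
  apply Setoid.ext
  intro x y
  rw [show ⇑(g • blk2 T V) = fun x y => blk2 T V (g⁻¹ x) (g⁻¹ y) from rfl]
  show (x = y ∨ _ ∨ _) ↔ (g⁻¹ x = g⁻¹ y ∨ _ ∨ _)
  rw [mem_image_perm, mem_image_perm, mem_image_perm, mem_image_perm]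
  constructor
  · rintro (rfl | h | h)
    · exact Or.inl rfl
    · exact Or.inr (Or.inl h)
    · exact Or.inr (Or.inr h)
  · rintro (h | h | h)
    · left
      have := congrArg g h
      rwa [Equiv.Perm.coe_inv, g.apply_symm_apply, g.apply_symm_apply] at this
    · exact Or.inr (Or.inl h)
    · exact Or.inr (Or.inr h)

theorem omg_smul (g : Equiv.Perm (Fin n)) (hg : g 0 = 0) (c : FacePoset n) :
    omg (g • c) = g • omg c := by
  unfold omg
  rw [Tst_smul g hg, Vst_smul g hg, blk2_smul]

theorem smul_inf (g : Equiv.Perm (Fin n)) (s t : Setoid (Fin n)) :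
    g • (s ⊓ t) = (g • s) ⊓ (g • t) := by
  apply Setoid.ext
  intro x y
  have h1 : (g • (s ⊓ t)) x y ↔ (s ⊓ t) (g⁻¹ x) (g⁻¹ y) := Iff.rfl
  have h2 : ((g • s) ⊓ (g • t)) x y ↔ (g • s) x y ∧ (g • t) x y := Setoid.inf_iff_and
  have h3 : (s ⊓ t) (g⁻¹ x) (g⁻¹ y) ↔ s (g⁻¹ x) (g⁻¹ y) ∧ t (g⁻¹ x) (g⁻¹ y) :=
    Setoid.inf_iff_and
  rw [h1]

theorem fpred_smul (g : Equiv.Perm (Fin n)) (hg : g 0 = 0) (c : FacePoset n) (π : BarPi n) :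
    fpred (g • c) (g • π) ↔ fpred c π := by
  unfold fpred
  rw [blockSet_smul_iff g hg, Tst_smul g hg, Vst_smul g hg, B0_smul g hg,
    blk_smul, blk_smul, smul_barpi_val, smul_setoid_le_iff, smul_setoid_le_iff,
    image_subset_iff_perm]

theorem fSet_smul (g : Equiv.Perm (Fin n)) (hg : g 0 = 0) (c : FacePoset n) :
    fSet (g • c) = (fSet c).image (fun ρ => g • ρ) := by
  ext π
  simp only [fSet, Finset.mem_filter, smul_face_val, Finset.mem_image]
  constructor
  · rintro ⟨⟨ρ, hρ, rfl⟩, hf⟩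
    exact ⟨ρ, ⟨hρ, (fpred_smul g hg c ρ).1 hf⟩, rfl⟩
  · rintro ⟨ρ, ⟨hρc, hρf⟩, rfl⟩
    exact ⟨⟨ρ, hρc, rfl⟩, (fpred_smul g hg c ρ).2 hρf⟩

theorem smul_barpi_le_iff (g : Equiv.Perm (Fin n)) {π ρ : BarPi n} :
    g • π ≤ g • ρ ↔ π ≤ ρ := by
  rw [barpi_le_iff, barpi_le_iff, smul_barpi_val, smul_barpi_val]
  exact smul_setoid_le_iff g

theorem tmap_smul (g : Equiv.Perm (Fin n)) (hg : g 0 = 0) (c : FacePoset n) :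
    tmap (g • c) = g • tmap c := by
  rcases tmap_cases c with ⟨he, ht⟩ | ⟨m, hm, hmin, ht⟩
  · have : fSet (g • c) = ∅ := by
      rw [fSet_smul g hg, he, Finset.image_empty]
    rw [tmap_of_empty this, ht, omg_smul g hg]
  · have hm' : g • m ∈ fSet (g • c) := by
      rw [fSet_smul g hg]
      exact Finset.mem_image.2 ⟨m, hm, rfl⟩
    have hmin' : ∀ x ∈ fSet (g • c), g • m ≤ x := by
      intro x hx
      rw [fSet_smul g hg] at hx
      obtain ⟨ρ, hρ, rfl⟩ := Finset.mem_image.1 hx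
      exact (smul_barpi_le_iff g).2 (hmin ρ hρ)
    rw [tmap_of_min hm' hmin', ht, smul_inf, omg_smul g hg, smul_barpi_val]

theorem tBar_smul (hn : 3 ≤ n) (g : Equiv.Perm (Fin n)) (hg : g 0 = 0)
    {c : FacePoset n} (h : NC c) : tBar hn (g • c) = g • tBar hn c := by
  apply barpi_ext
  rw [tBar_val hn ((NC_smul g hg c).2 h), smul_barpi_val, tBar_val hn h,
    tmap_smul g hg]

theorem match_equivariant (hn : 3 ≤ n) :
    ∀ g ∈ S1Sn n, ∀ p ∈ Match hn, (g • p.1, g • p.2) ∈ Match hn := by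
  intro g hg p hp
  have hg0 : g 0 = 0 := by
    have : g • (0 : Fin n) = 0 := hg
    exact this
  obtain ⟨hNC, hτ, hins⟩ := hp
  have hNC' : NC (g • p.1) := (NC_smul g hg0 p.1).2 hNC
  have hτeq := tBar_smul hn g hg0 hNC
  refine ⟨hNC', ?_, ?_⟩
  · rw [hτeq, smul_face_val, Finset.mem_image]
    rintro ⟨ρ, hρ, heq⟩
    exact hτ ((MulAction.injective g heq) ▸ hρ)
  · rw [hτeq, smul_face_val, smul_face_val, hins, Finset.image_insert]
end

end EqMatch

/-- For every `n ≥ 3`, there exists an `(S_1 × S_{n-1})`-equivariant acyclic matching on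
the face poset of the nerve of `Π̄_n` (nonempty finite chains ordered by inclusion) whose
set of critical elements is exactly `C_n ∪ {α_n}`, where `α_n` is the one-element chain
consisting of the partition `{{1}, {2,…,n}}`. -/
theorem exists_equivariant_matching_facePoset (n : ℕ) [NeZero n] (hn : 3 ≤ n) :
    ∃ M : Set (FacePoset n × FacePoset n),
      IsAcyclicMatchingOn Set.univ M ∧
      (∀ g ∈ S1Sn n, ∀ p ∈ M, (g • p.1, g • p.2) ∈ M) ∧
      criticalSet Set.univ M = Cn n ∪ {alphaChain n hn} := by
  refine ⟨EqMatch.Match hn,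
    ⟨⟨fun p hp => EqMatch.match_cov hn hp, EqMatch.match_unique hn⟩,
      EqMatch.match_acyclic hn⟩,
    EqMatch.match_equivariant hn,
    EqMatch.crit_eq hn⟩
end

section
/- For every n ≥ 3, there exists an (S_1×S_{n-1})-equivariant acyclic matching on the subposet of F(Δ(Π̄_n)) consisting of all nonempty chains of Π̄_n that contain no partition of the form v_k = {{1,k}} ∪ {{j} : j ≠ 1,k}, such that the one-element chain α_n = { {{1},{2,…,n}} } is the only critical element. -/
/-- The partition `v_k = {{1,k}} ∪ {{j} : j ≠ 1,k}` of `[n]` (with `0` playing the role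
of `1`), as a setoid: `x ∼ y` iff `x = y` or both `x` and `y` lie in `{0, k}`. -/
def vSetoid (n : ℕ) [NeZero n] (k : Fin n) : Setoid (Fin n) :=
  ⟨fun x y => x = y ∨ (x ∈ ({0, k} : Set (Fin n)) ∧ y ∈ ({0, k} : Set (Fin n))), by
    constructor
    · intro x; exact Or.inl rfl
    · rintro x y (rfl | ⟨hx, hy⟩)
      · exact Or.inl rfl
      · exact Or.inr ⟨hy, hx⟩
    · rintro x y z (rfl | ⟨hx, hy⟩) (rfl | ⟨hy', hz⟩)
      · exact Or.inl rfl
      · exact Or.inr ⟨hy', hz⟩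
      · exact Or.inr ⟨hx, hy⟩
      · exact Or.inr ⟨hx, hz⟩⟩

/-- The set `V = {v_2, …, v_n}` of partitions of `[n]` having the block `{1, k}` for some
`k ≠ 1` and otherwise only singleton blocks. -/
def Vset (n : ℕ) [NeZero n] : Set (BarPi n) :=
  {s | ∃ k : Fin n, k ≠ 0 ∧ s.1 = vSetoid n k}

theorem Equiv.Perm.inv_apply_self {α : Type*} (f : Equiv.Perm α) (x : α) : f⁻¹ (f x) = x :=
  f.symm_apply_apply x

theorem Equiv.Perm.apply_inv_self {α : Type*} (f : Equiv.Perm α) (x : α) : f (f⁻¹ x) = x :=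
  f.apply_symm_apply x

section AuxDev

variable {n : ℕ} [NeZero n]

/-- The `0`-block of `s` is a singleton. -/
def zsing (s : BarPi n) : Prop := ∀ y, s.1 0 y → y = 0

theorem not_zsing_iff {s : BarPi n} : ¬ zsing s ↔ ∃ y, s.1 0 y ∧ y ≠ 0 := by
  unfold zsing; push_neg; rfl

theorem zsing_le_alpha {s : BarPi n} (h : zsing s) : s.1 ≤ alphaSetoid n := by
  rw [Setoid.le_def]
  intro x y hxy
  by_cases hx : x = 0
  · subst hx; exact Or.inl (h y hxy).symm
  by_cases hy : y = 0
  · subst hy; exact absurd (h x (s.1.symm' hxy)) hx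
  · exact Or.inr ⟨hx, hy⟩

theorem zsing_alphaBar (hn : 3 ≤ n) : zsing (alphaBar n hn) := by
  rintro y (h | ⟨h0, _⟩)
  · exact h.symm
  · exact absurd rfl h0

theorem zsing_not_mem_V {s : BarPi n} (h : zsing s) : s ∉ Vset n := by
  rintro ⟨k, hk, hs⟩
  have h0k : s.1 0 k := by
    rw [hs]
    exact Or.inr ⟨Set.mem_insert _ _, Set.mem_insert_of_mem _ rfl⟩
  exact hk (h k h0k)

/-- The set of elements of the chain whose `0`-block is not a singleton. -/
def Bset (σ : FacePoset n) : Set (BarPi n) := {s | s ∈ σ.1 ∧ ¬ zsing s}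

/-- The element to be toggled in the matching. -/
def IsX (hn : 3 ≤ n) (σ : FacePoset n) (x : BarPi n) : Prop :=
  (Bset σ = ∅ ∧ x = alphaBar n hn) ∨
    (∃ m, IsLeast (Bset σ) m ∧ x.1 = m.1 ⊓ alphaSetoid n)

theorem isX_zsing {hn : 3 ≤ n} {σ : FacePoset n} {x : BarPi n} (hx : IsX hn σ x) :
    zsing x := by
  rcases hx with ⟨-, rfl⟩ | ⟨m, -, hm⟩
  · exact zsing_alphaBar hn
  · intro y hy
    rw [hm] at hy
    rcases (Setoid.inf_iff_and.mp hy).2 with h | ⟨h0, -⟩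
    · exact h.symm
    · exact absurd rfl h0

theorem isX_unique {hn : 3 ≤ n} {σ : FacePoset n} {x y : BarPi n}
    (hx : IsX hn σ x) (hy : IsX hn σ y) : x = y := by
  rcases hx with ⟨hB, rfl⟩ | ⟨m, hm, hxm⟩
  · rcases hy with ⟨-, rfl⟩ | ⟨m, hm, -⟩
    · rfl
    · rw [hB] at hm; exact absurd hm.1 (Set.notMem_empty m)
  · rcases hy with ⟨hB, rfl⟩ | ⟨m', hm', hym⟩
    · rw [hB] at hm; exact absurd hm.1 (Set.notMem_empty m)
    · have : m = m' := hm.unique hm'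
      subst this
      exact Subtype.ext (hxm.trans hym.symm)

theorem isX_congr {hn : 3 ≤ n} {σ σ' : FacePoset n} {x : BarPi n}
    (h : Bset σ = Bset σ') (hx : IsX hn σ x) : IsX hn σ' x := by
  unfold IsX at hx ⊢
  rwa [h] at hx

theorem Bset_insert {hn : 3 ≤ n} {σ τ : FacePoset n} {x : BarPi n} (hx : zsing x)
    (h : τ.1 = insert x σ.1) : Bset τ = Bset σ := by
  ext s
  constructor
  · rintro ⟨hs, hns⟩
    rw [h, Finset.mem_insert] at hs
    rcases hs with rfl | hs
    · exact absurd hx hns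
    · exact ⟨hs, hns⟩
  · rintro ⟨hs, hns⟩
    exact ⟨by rw [h]; exact Finset.mem_insert_of_mem hs, hns⟩

theorem isX_comparable {hn : 3 ≤ n} {σ : FacePoset n} {x : BarPi n} (hx : IsX hn σ x) :
    ∀ s ∈ σ.1, s ≤ x ∨ x ≤ s := by
  intro s hs
  rcases hx with ⟨hB, rfl⟩ | ⟨m, hm, hxm⟩
  · left
    have hzs : zsing s := by
      by_contra hc
      rw [Set.eq_empty_iff_forall_notMem] at hB
      exact hB s ⟨hs, hc⟩
    exact zsing_le_alpha hzs
  · by_cases hzs : zsing s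
    · left
      -- s ≤ m since s, m comparable in the chain and m ≤ s is impossible
      have hmσ : m ∈ σ.1 := hm.1.1
      have hnm : ¬ zsing m := hm.1.2
      have hsm : s.1 ≤ m.1 := by
        have hne : s ≠ m := fun h => hnm (h ▸ hzs)
        rcases σ.2.2 (Finset.mem_coe.2 hs) (Finset.mem_coe.2 hmσ) hne with h | h
        · exact h
        · exfalso
          obtain ⟨y, hmy, hy0⟩ := not_zsing_iff.mp hnm
          exact hy0 (hzs y (Setoid.le_def.mp h hmy))
      show s.1 ≤ x.1
      rw [hxm]
      exact le_inf hsm (zsing_le_alpha hzs)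
    · right
      have hms : m ≤ s := hm.2 ⟨hs, hzs⟩
      show x.1 ≤ s.1
      rw [hxm]
      exact le_trans inf_le_left hms

theorem exists_isX (hn : 3 ≤ n) (σ : FacePoset n) (hσ : ∀ s ∈ σ.1, s ∉ Vset n) :
    ∃ x, IsX hn σ x := by
  by_cases hB : Bset σ = ∅
  · exact ⟨alphaBar n hn, Or.inl ⟨hB, rfl⟩⟩
  -- Bset σ is a nonempty finite subset of a chain, hence has a least element
  have hfin : (Bset σ).Finite := Set.Finite.subset σ.1.finite_toSet (fun s hs => hs.1)
  obtain ⟨m, hmB, hmin⟩ :=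
    Set.Finite.exists_minimal hfin (Set.nonempty_iff_ne_empty.2 hB)
  have hleast : IsLeast (Bset σ) m := by
    refine ⟨hmB, fun b hb => ?_⟩
    by_cases hbe : b = m
    · exact le_of_eq hbe.symm
    have hne : m ≠ b := fun h => hbe h.symm
    rcases σ.2.2 (Finset.mem_coe.2 hmB.1) (Finset.mem_coe.2 hb.1) hne with h | h
    · exact h
    · exact absurd (le_antisymm h (hmin hb h)) hbe

  obtain ⟨k, hm0k, hk0⟩ := not_zsing_iff.mp hmB.2
  -- there exist two distinct nonzero related elements of m
  have hkey : ∃ u v : Fin n, u ≠ 0 ∧ v ≠ 0 ∧ u ≠ v ∧ m.1 u v := by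
    by_contra hc
    push_neg at hc
    have heq : m.1 = vSetoid n k := by
      apply Setoid.ext
      intro u v
      constructor
      · intro h
        by_cases huv : u = v
        · exact Or.inl huv
        by_cases hu : u = 0
        · subst hu
          have hvk : v = k := by
            by_contra hvk
            have hv0 : v ≠ 0 := fun h' => huv h'.symm
            exact hc v k hv0 hk0 hvk (m.1.trans' (m.1.symm' h) hm0k)
          subst hvk
          exact Or.inr ⟨Set.mem_insert _ _, Set.mem_insert_of_mem _ rfl⟩
        by_cases hv : v = 0
        · subst hv
          have huk : u = k := by
            by_contra huk
            exact hc u k hu hk0 huk (m.1.trans' h hm0k)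
          subst huk
          exact Or.inr ⟨Set.mem_insert_of_mem _ rfl, Set.mem_insert _ _⟩
        · exact absurd h (hc u v hu hv huv)
      · rintro (rfl | ⟨hu, hv⟩)
        · exact m.1.refl' u
        have hrel : ∀ w ∈ ({0, k} : Set (Fin n)), m.1 0 w := by
          rintro w (rfl | hw)
          · exact m.1.refl' 0
          · rw [Set.mem_singleton_iff] at hw
            subst hw
            exact hm0k
        exact m.1.trans' (m.1.symm' (hrel u hu)) (hrel v hv)
    exact hσ m hmB.1 ⟨k, hk0, heq⟩
  obtain ⟨u, v, hu, hv, huv, hm⟩ := hkey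
  have hbot : m.1 ⊓ alphaSetoid n ≠ ⊥ := by
    intro h
    have : (m.1 ⊓ alphaSetoid n) u v := Setoid.inf_iff_and.2 ⟨hm, Or.inr ⟨hu, hv⟩⟩
    rw [h] at this
    exact huv (by rwa [show ⇑(⊥ : Setoid (Fin n)) = (· = ·) from Setoid.bot_def] at this)
  have htop : m.1 ⊓ alphaSetoid n ≠ ⊤ := by
    intro h
    have h01 : (⊤ : Setoid (Fin n)) 0 ⟨1, by omega⟩ := trivial
    rw [← h] at h01
    rcases (Setoid.inf_iff_and.mp h01).2 with h2 | ⟨h0, -⟩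
    · have : (0 : Fin n) = ⟨1, by omega⟩ := h2
      simp [Fin.ext_iff] at this
    · exact h0 rfl
  exact ⟨⟨m.1 ⊓ alphaSetoid n, hbot, htop⟩, Or.inr ⟨m, hleast, rfl⟩⟩

theorem insert_isX_chain {hn : 3 ≤ n} {σ : FacePoset n} {x : BarPi n} (hx : IsX hn σ x) :
    IsChain (· ≤ ·) (↑(insert x σ.1) : Set (BarPi n)) := by
  rw [Finset.coe_insert]
  exact σ.2.2.insert fun b hb _ => (isX_comparable hx b (Finset.mem_coe.1 hb)).symm

/-- The matching. -/
def Mmatch (n : ℕ) [NeZero n] (hn : 3 ≤ n) : Set (FacePoset n × FacePoset n) :=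
  {p | (∀ s ∈ p.1.1, s ∉ Vset n) ∧
    ∃ x, IsX hn p.1 x ∧ x ∉ p.1.1 ∧ p.2.1 = insert x p.1.1}

theorem smul_face_def {n : ℕ} (g : Equiv.Perm (Fin n)) (σ : FacePoset n) :
    (g • σ).1 = σ.1.image (fun s => g • s) := rfl

theorem smul_barPi_def {n : ℕ} (g : Equiv.Perm (Fin n)) (s : BarPi n) :
    (g • s).1 = g • s.1 := rfl

theorem smul_barPi_le_iff {n : ℕ} (g : Equiv.Perm (Fin n)) {s t : BarPi n} :
    g • s ≤ g • t ↔ s ≤ t := by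
  constructor
  · intro h
    have := perm_smul_barPi_mono n g⁻¹ h
    simpa [inv_smul_smul] using this
  · exact fun h => perm_smul_barPi_mono n g h

section SmulAux

variable {n : ℕ} [NeZero n] {g : Equiv.Perm (Fin n)}

theorem zsing_smul (hg0 : g 0 = 0) (hg0' : g⁻¹ 0 = 0) {s : BarPi n} :
    zsing (g • s) ↔ zsing s := by
  constructor
  · intro h y hy
    have h2 : (g • s).1 0 (g y) := by
      rw [smul_barPi_def, perm_smul_setoid_rel, hg0', Equiv.Perm.inv_apply_self]
      exact hy
    have h3 := h (g y) h2
    have h4 := congrArg (⇑g⁻¹) h3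
    rwa [Equiv.Perm.inv_apply_self, hg0'] at h4
  · intro h y hy
    rw [smul_barPi_def, perm_smul_setoid_rel, hg0'] at hy
    have h3 := h (g⁻¹ y) hy
    have h4 := congrArg (⇑g) h3
    rwa [Equiv.Perm.apply_inv_self, hg0] at h4

theorem smul_alphaSetoid (hg0 : g 0 = 0) (hg0' : g⁻¹ 0 = 0) :
    g • alphaSetoid n = alphaSetoid n := by
  apply Setoid.ext
  intro x y
  rw [perm_smul_setoid_rel]
  show (g⁻¹ x = g⁻¹ y ∨ (g⁻¹ x ≠ 0 ∧ g⁻¹ y ≠ 0)) ↔ (x = y ∨ (x ≠ 0 ∧ y ≠ 0))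
  have hz : ∀ z : Fin n, g⁻¹ z = 0 ↔ z = 0 := by
    intro z
    constructor
    · intro h
      have h2 := congrArg (⇑g) h
      rwa [Equiv.Perm.apply_inv_self, hg0] at h2
    · rintro rfl; exact hg0'
  simp only [ne_eq, (Equiv.injective g⁻¹).eq_iff, hz]

theorem smul_alphaBar (hn : 3 ≤ n) (hg0 : g 0 = 0) (hg0' : g⁻¹ 0 = 0) :
    g • alphaBar n hn = alphaBar n hn :=
  Subtype.ext (smul_alphaSetoid hg0 hg0')

theorem smul_setoid_inf (g : Equiv.Perm (Fin n)) (s t : Setoid (Fin n)) :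
    g • (s ⊓ t) = g • s ⊓ g • t := by
  apply Setoid.ext
  intro x y
  simp only [perm_smul_setoid_rel]
  constructor
  · intro h
    obtain ⟨h1, h2⟩ := Setoid.inf_iff_and.1 h
    exact Setoid.inf_iff_and.2 ⟨h1, h2⟩
  · intro h
    obtain ⟨h1, h2⟩ := Setoid.inf_iff_and.1 h
    exact Setoid.inf_iff_and.2 ⟨h1, h2⟩

theorem smul_vSetoid (hg0 : g 0 = 0) (hg0' : g⁻¹ 0 = 0) (k : Fin n) :
    g • vSetoid n k = vSetoid n (g k) := by
  apply Setoid.ext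
  intro x y
  rw [perm_smul_setoid_rel]
  show (g⁻¹ x = g⁻¹ y ∨ (g⁻¹ x ∈ ({0, k} : Set (Fin n)) ∧ g⁻¹ y ∈ ({0, k} : Set (Fin n))))
    ↔ (x = y ∨ (x ∈ ({0, g k} : Set (Fin n)) ∧ y ∈ ({0, g k} : Set (Fin n))))
  have hz : ∀ z : Fin n, g⁻¹ z ∈ ({0, k} : Set (Fin n)) ↔ z ∈ ({0, g k} : Set (Fin n)) := by
    intro z
    simp only [Set.mem_insert_iff, Set.mem_singleton_iff]
    rw [Equiv.Perm.inv_eq_iff_eq, Equiv.Perm.inv_eq_iff_eq, hg0]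
  rw [(Equiv.injective g⁻¹).eq_iff, hz, hz]

theorem smul_not_mem_V (hg0 : g 0 = 0) (hg0' : g⁻¹ 0 = 0) {s : BarPi n}
    (hs : s ∉ Vset n) : g • s ∉ Vset n := by
  rintro ⟨k, hk, h⟩
  apply hs
  refine ⟨g⁻¹ k, ?_, ?_⟩
  · intro hc
    have h2 := congrArg (⇑g) hc
    rw [Equiv.Perm.apply_inv_self, hg0] at h2
    exact hk h2
  · rw [smul_barPi_def] at h
    have h2 := congrArg (fun t => g⁻¹ • t) h
    simp only [inv_smul_smul] at h2
    rw [h2]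
    exact smul_vSetoid (g := g⁻¹) hg0' (by rw [inv_inv]; exact hg0) k

theorem mem_smul_face {σ : FacePoset n} {s : BarPi n} :
    s ∈ (g • σ).1 ↔ ∃ t ∈ σ.1, g • t = s := by
  rw [smul_face_def, Finset.mem_image]

theorem isX_smul {hn : 3 ≤ n} (hg0 : g 0 = 0) (hg0' : g⁻¹ 0 = 0)
    {σ : FacePoset n} {x : BarPi n} (hx : IsX hn σ x) : IsX hn (g • σ) (g • x) := by
  rcases hx with ⟨hB, rfl⟩ | ⟨m, hm, hxm⟩
  · left
    refine ⟨?_, smul_alphaBar hn hg0 hg0'⟩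
    rw [Set.eq_empty_iff_forall_notMem]
    rintro s ⟨hs, hns⟩
    obtain ⟨t, ht, rfl⟩ := mem_smul_face.1 hs
    rw [zsing_smul hg0 hg0'] at hns
    rw [Set.eq_empty_iff_forall_notMem] at hB
    exact hB t ⟨ht, hns⟩
  · right
    refine ⟨g • m, ⟨⟨?_, ?_⟩, ?_⟩, ?_⟩
    · exact mem_smul_face.2 ⟨m, hm.1.1, rfl⟩
    · rw [zsing_smul hg0 hg0']; exact hm.1.2
    · rintro s ⟨hs, hns⟩
      obtain ⟨t, ht, rfl⟩ := mem_smul_face.1 hs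
      rw [zsing_smul hg0 hg0'] at hns
      exact (smul_barPi_le_iff g).2 (hm.2 ⟨ht, hns⟩)
    · rw [smul_barPi_def, smul_barPi_def, hxm, smul_setoid_inf,
        smul_alphaSetoid hg0 hg0']

end SmulAux

section MatchAux

variable {n : ℕ} [NeZero n] {hn : 3 ≤ n}

theorem mem_Mmatch_iff {p : FacePoset n × FacePoset n} :
    p ∈ Mmatch n hn ↔ (∀ s ∈ p.1.1, s ∉ Vset n) ∧
      ∃ x, IsX hn p.1 x ∧ x ∉ p.1.1 ∧ p.2.1 = insert x p.1.1 := Iff.rfl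

theorem Bset_pair {p : FacePoset n × FacePoset n} (hp : p ∈ Mmatch n hn) :
    Bset p.2 = Bset p.1 := by
  obtain ⟨-, x, hx, -, hτ⟩ := hp
  exact Bset_insert (hn := hn) (isX_zsing hx) hτ

theorem Mmatch_eq_of_fst {p q : FacePoset n × FacePoset n}
    (hp : p ∈ Mmatch n hn) (hq : q ∈ Mmatch n hn) (h : p.1 = q.1) : p = q := by
  obtain ⟨-, x, hx, hxn, hτ⟩ := hp
  obtain ⟨-, y, hy, hyn, hτ'⟩ := hq
  have hxy : x = y := isX_unique hx (h ▸ hy)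
  refine Prod.ext h (Subtype.ext ?_)
  rw [hτ, hτ', hxy, h]

theorem Mmatch_not_fst_eq_snd {p q : FacePoset n × FacePoset n}
    (hp : p ∈ Mmatch n hn) (hq : q ∈ Mmatch n hn) (h : p.1 = q.2) : False := by
  obtain ⟨-, x, hx, hxn, hτ⟩ := hp
  have hB : Bset q.1 = Bset p.1 := by rw [← Bset_pair hq, ← h]
  obtain ⟨-, y, hy, hyn, hτ'⟩ := hq
  have hxy : x = y := isX_unique hx (isX_congr hB hy)
  apply hxn
  rw [h, hτ', hxy]
  exact Finset.mem_insert_self y q.1.1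

theorem Mmatch_eq_of_snd {p q : FacePoset n × FacePoset n}
    (hp : p ∈ Mmatch n hn) (hq : q ∈ Mmatch n hn) (h : p.2 = q.2) : p = q := by
  have hB : Bset q.1 = Bset p.1 := by
    rw [← Bset_pair hq, ← h, Bset_pair hp]
  obtain ⟨hpS, x, hx, hxn, hτ⟩ := hp
  obtain ⟨hqS, y, hy, hyn, hτ'⟩ := hq
  have hxy : x = y := isX_unique hx (isX_congr hB hy)
  have h1 : p.1.1 = q.1.1 := by
    have e1 : p.1.1 = p.2.1.erase x := by rw [hτ, Finset.erase_insert hxn]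
    have e2 : q.1.1 = q.2.1.erase y := by rw [hτ', Finset.erase_insert hyn]
    rw [e1, e2, h, hxy]
  have h1' : p.1 = q.1 := Subtype.ext h1
  exact Prod.ext h1' h

theorem Mmatch_acyclic :
    ¬∃ (k : ℕ) (a b : ZMod k → FacePoset n), 2 ≤ k ∧ Function.Injective a ∧
      ∀ i : ZMod k, (a i, b i) ∈ Mmatch n hn ∧
        CovByWithin {c : FacePoset n | ∀ s ∈ c.1, s ∉ Vset n} (a (i + 1)) (b i) := by
  rintro ⟨k, a, b, hk, hinj, hcyc⟩
  haveI : NeZero k := ⟨by omega⟩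
  haveI : Fact (1 < k) := ⟨by omega⟩
  have hM := fun i => (hcyc i).1
  choose x hx hxn hb using fun i => (hM i).2
  have hsub : ∀ i : ZMod k, (a (i + 1)).1 ⊆ (b i).1 := fun i =>
    ((hcyc i).2.2.2.1).le
  -- Bsets only shrink around the cycle
  have step1 : ∀ i : ZMod k, Bset (a (i + 1)) ⊆ Bset (a i) := by
    rintro i s ⟨hs, hns⟩
    have hs2 : s ∈ (b i).1 := hsub i hs
    rw [hb i, Finset.mem_insert] at hs2
    rcases hs2 with rfl | hs2
    · exact absurd (isX_zsing (hx i)) hns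
    · exact ⟨hs2, hns⟩
  have step2 : ∀ (j : ℕ) (i : ZMod k), Bset (a (i + j)) ⊆ Bset (a i) := by
    intro j
    induction j with
    | zero => intro i; simp
    | succ j ih =>
      intro i
      have e : (i + (j + 1 : ℕ) : ZMod k) = (i + j) + 1 := by push_cast; ring
      rw [e]
      exact (step1 (i + j)).trans (ih i)
  have step3 : ∀ i : ZMod k, Bset (a i) ⊆ Bset (a (i + 1)) := by
    intro i
    have e : ((i + 1) + ((k - 1 : ℕ) : ZMod k)) = i := by
      rw [Nat.cast_sub (by omega : 1 ≤ k), Nat.cast_one, ZMod.natCast_self]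
      ring
    calc Bset (a i) = Bset (a ((i + 1) + ((k - 1 : ℕ) : ZMod k))) := by rw [e]
    _ ⊆ Bset (a (i + 1)) := step2 _ _
  have step4 : ∀ i : ZMod k, x i = x (i + 1) := by
    intro i
    have hBeq : Bset (a i) = Bset (a (i + 1)) :=
      subset_antisymm (step3 i) (step1 i)
    exact isX_unique (isX_congr hBeq (hx i)) (hx (i + 1))
  have step5 : ∀ i : ZMod k, (a (i + 1)).1 ⊆ (a i).1 := by
    intro i s hs
    have hs2 : s ∈ (b i).1 := hsub i hs
    rw [hb i, Finset.mem_insert] at hs2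
    rcases hs2 with rfl | hs2
    · exact absurd (step4 i ▸ hs) (hxn (i + 1))
    · exact hs2
  have step6 : ∀ i : ZMod k, (a (i + 1)).1.card < (a i).1.card := by
    intro i
    apply Finset.card_lt_card
    rw [Finset.ssubset_iff_subset_ne]
    refine ⟨step5 i, fun h => ?_⟩
    have : i + 1 = i := hinj (Subtype.ext h)
    have h10 : (1 : ZMod k) = 0 := by
      have := congrArg (fun z => z - i) this
      simpa [add_comm, add_sub_cancel_right] using this
    exact one_ne_zero h10
  have step7 : ∀ (j : ℕ) (i : ZMod k), (a (i + j)).1.card + j ≤ (a i).1.card := by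
    intro j
    induction j with
    | zero => intro i; simp
    | succ j ih =>
      intro i
      have e : (i + (j + 1 : ℕ) : ZMod k) = (i + j) + 1 := by push_cast; ring
      have h1 := step6 (i + j)
      have h2 := ih i
      rw [e]
      omega
  have := step7 k 0
  rw [ZMod.natCast_self, add_zero] at this
  omega

end MatchAux

end AuxDev
/-- For every `n ≥ 3`, there exists an `(S_1 × S_{n-1})`-equivariant acyclic matching on
the subposet of the face poset of the nerve of `Π̄_n` consisting of all nonempty chains
containing no partition of the form `v_k`, such that the one-element chain
`α_n = {{{1},{2,…,n}}}` is the only critical element. -/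
theorem exists_equivariant_matching_fiber_zero (n : ℕ) [NeZero n] (hn : 3 ≤ n) :
    ∃ M : Set (FacePoset n × FacePoset n),
      IsAcyclicMatchingOn {c : FacePoset n | ∀ s ∈ c.1, s ∉ Vset n} M ∧
      (∀ g ∈ S1Sn n, ∀ p ∈ M, (g • p.1, g • p.2) ∈ M) ∧
      criticalSet {c : FacePoset n | ∀ s ∈ c.1, s ∉ Vset n} M = {alphaChain n hn} := by
  classical
  refine ⟨Mmatch n hn, ⟨⟨?_, ?_⟩, Mmatch_acyclic⟩, ?_, ?_⟩
  · -- covering pairs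
    rintro p ⟨hpS, x, hx, hxn, hτ⟩
    refine ⟨hpS, ?_, ?_, ?_⟩
    · intro s hs
      rw [hτ, Finset.mem_insert] at hs
      rcases hs with rfl | hs
      · exact zsing_not_mem_V (isX_zsing hx)
      · exact hpS s hs
    · rw [lt_iff_le_not_ge]
      constructor
      · show p.1.1 ⊆ p.2.1
        rw [hτ]; exact Finset.subset_insert _ _
      · intro hle
        exact hxn (hle (hτ ▸ Finset.mem_insert_self x p.1.1))
    · intro c _ hlt1 hlt2
      have h1 : p.1.1 ⊂ c.1 := by
        rw [Finset.ssubset_def]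
        exact ⟨hlt1.le, fun h => hlt1.not_ge h⟩
      have h2 : c.1 ⊂ p.2.1 := by
        rw [Finset.ssubset_def]
        exact ⟨hlt2.le, fun h => hlt2.not_ge h⟩
      have hc1 := Finset.card_lt_card h1
      have hc2 := Finset.card_lt_card h2
      rw [hτ, Finset.card_insert_of_notMem hxn] at hc2
      omega
  · -- uniqueness of the matching
    rintro p hp q hq (h | h | h | h)
    · exact Mmatch_eq_of_fst hp hq h
    · exact (Mmatch_not_fst_eq_snd hp hq h).elim
    · exact (Mmatch_not_fst_eq_snd hq hp h.symm).elim
    · exact Mmatch_eq_of_snd hp hq h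
  · -- equivariance
    intro g hg p hp
    have hg0 : g 0 = 0 := by
      have := MulAction.mem_stabilizer_iff.mp hg
      rwa [Equiv.Perm.smul_def] at this
    have hg0' : g⁻¹ 0 = 0 := by
      conv_lhs => rw [← hg0]
      rw [Equiv.Perm.inv_apply_self]
    obtain ⟨hpS, x, hx, hxn, hτ⟩ := hp
    refine ⟨?_, g • x, isX_smul hg0 hg0' hx, ?_, ?_⟩
    · intro s hs
      obtain ⟨t, ht, rfl⟩ := mem_smul_face.1 hs
      exact smul_not_mem_V hg0 hg0' (hpS t ht)
    · intro hc
      obtain ⟨t, ht, hteq⟩ := mem_smul_face.1 hc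
      have : t = x := MulAction.injective g hteq
      exact hxn (this ▸ ht)
    · show (g • p.2).1 = insert (g • x) (g • p.1).1
      rw [smul_face_def, hτ, Finset.image_insert, smul_face_def]
  · -- critical set
    ext σ
    simp only [Set.mem_singleton_iff]
    constructor
    · rintro ⟨hσS, hcrit⟩
      obtain ⟨x, hx⟩ := exists_isX hn σ hσS
      by_cases hxn : x ∈ σ.1
      · by_cases hsing : σ.1 = {x}
        · have hBe : Bset σ = ∅ := by
            rw [Set.eq_empty_iff_forall_notMem]
            rintro s ⟨hs, hns⟩
            rw [hsing, Finset.mem_singleton] at hs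
            exact hns (hs ▸ isX_zsing hx)
          rcases hx with ⟨-, rfl⟩ | ⟨m, hm, -⟩
          · exact Subtype.ext (by rw [hsing]; rfl)
          · rw [hBe] at hm; exact absurd hm.1 (Set.notMem_empty m)
        · exfalso
          have hex : ∃ y ∈ σ.1, y ≠ x := by
            by_contra hc
            push_neg at hc
            exact hsing (Finset.eq_singleton_iff_unique_mem.2 ⟨hxn, hc⟩)
          obtain ⟨y, hy, hyx⟩ := hex
          have hchain : IsChain (· ≤ ·) (↑(σ.1.erase x) : Set (BarPi n)) :=
            IsChain.mono (Finset.coe_subset.2 (Finset.erase_subset _ _)) σ.2.2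
          set σ' : FacePoset n :=
            ⟨σ.1.erase x, ⟨y, Finset.mem_erase.2 ⟨hyx, hy⟩⟩, hchain⟩ with hσ'
          have hins : σ.1 = insert x σ'.1 := (Finset.insert_erase hxn).symm
          have hBeq : Bset σ = Bset σ' := Bset_insert (hn := hn) (isX_zsing hx) hins
          have hmem : (σ', σ) ∈ Mmatch n hn := by
            refine ⟨?_, x, isX_congr hBeq hx, Finset.notMem_erase x σ.1, hins⟩
            intro s hs
            exact hσS s (Finset.erase_subset _ _ hs)
          exact (hcrit _ hmem).2 rfl
      · exfalso
        have hmem : (σ, (⟨insert x σ.1, ⟨x, Finset.mem_insert_self x σ.1⟩,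
            insert_isX_chain hx⟩ : FacePoset n)) ∈ Mmatch n hn :=
          ⟨hσS, x, hx, hxn, rfl⟩
        exact (hcrit _ hmem).1 rfl
    · rintro rfl
      refine ⟨?_, ?_⟩
      · intro s hs
        rw [show (alphaChain n hn).1 = {alphaBar n hn} from rfl,
          Finset.mem_singleton] at hs
        subst hs
        exact zsing_not_mem_V (zsing_alphaBar hn)
      · rintro p hp
        obtain ⟨hpS, x, hx, hxn, hτ⟩ := hp
        constructor
        · intro h
          have hBe : Bset p.1 = ∅ := by
            rw [Set.eq_empty_iff_forall_notMem]
            rintro s ⟨hs, hns⟩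
            rw [h, show (alphaChain n hn).1 = {alphaBar n hn} from rfl,
              Finset.mem_singleton] at hs
            exact hns (hs ▸ zsing_alphaBar hn)
          rcases hx with ⟨-, rfl⟩ | ⟨m, hm, -⟩
          · apply hxn
            rw [h]
            exact Finset.mem_singleton_self _
          · rw [hBe] at hm; exact absurd hm.1 (Set.notMem_empty m)
        · intro h
          have hone : p.2.1.card = 1 := by
            rw [h, show (alphaChain n hn).1 = {alphaBar n hn} from rfl,
              Finset.card_singleton]
          rw [hτ, Finset.card_insert_of_notMem hxn] at hone
          have := Finset.Nonempty.card_pos p.1.2.1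
          omega
end

section
/- Let n ≥ 3 and let G be a subgroup of S_1×S_{n-1}. Then the number of G-orbits on the set C_n equals the index of G in S_1×S_{n-1}. -/
section AuxDev

open Finset

variable {n : ℕ}

theorem setoid_bot_rel {α : Type*} {x y : α} : (⊥ : Setoid α) x y ↔ x = y := by
  rw [show ⇑(⊥ : Setoid α) = (· = ·) from Setoid.bot_def]

/-- The setoid whose only nontrivial block is `B`. -/
def bSetoid (B : Finset (Fin n)) : Setoid (Fin n) :=
  ⟨fun x y => x = y ∨ (x ∈ B ∧ y ∈ B), by
    constructor
    · intro x; exact Or.inl rfl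
    · rintro x y (rfl | ⟨hx, hy⟩)
      · exact Or.inl rfl
      · exact Or.inr ⟨hy, hx⟩
    · rintro x y z (rfl | ⟨hx, hy⟩) (rfl | ⟨hy', hz⟩)
      · exact Or.inl rfl
      · exact Or.inr ⟨hy', hz⟩
      · exact Or.inr ⟨hx, hy⟩
      · exact Or.inr ⟨hx, hz⟩⟩

theorem bSetoid_rel (B : Finset (Fin n)) (x y : Fin n) :
    bSetoid B x y ↔ x = y ∨ (x ∈ B ∧ y ∈ B) := Iff.rfl

theorem bSetoid_ne_bot {B : Finset (Fin n)} (hB : 1 < B.card) : bSetoid B ≠ ⊥ := by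
  obtain ⟨x, hx, y, hy, hxy⟩ := Finset.one_lt_card.mp hB
  intro h
  have hx' : bSetoid B x y := Or.inr ⟨hx, hy⟩
  rw [h] at hx'
  exact hxy (setoid_bot_rel.mp hx')

theorem bSetoid_ne_top {B : Finset (Fin n)} (hn1 : 1 < n) (hB : B ≠ Finset.univ) :
    bSetoid B ≠ ⊤ := by
  obtain ⟨x, hx⟩ : ∃ x, x ∉ B := by
    by_contra hc
    push_neg at hc
    exact hB (Finset.eq_univ_iff_forall.mpr hc)
  obtain ⟨y, hy⟩ : ∃ y : Fin n, y ≠ x := by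
    rcases eq_or_ne x ⟨0, by omega⟩ with rfl | h
    · exact ⟨⟨1, by omega⟩, by simp [Fin.ext_iff]⟩
    · exact ⟨⟨0, by omega⟩, fun hh => h hh.symm⟩
  intro h
  have hxy : bSetoid B x y := by rw [h]; trivial
  rcases hxy with rfl | ⟨hx', _⟩
  · exact hy rfl
  · exact hx hx'

theorem bSetoid_mono {B C : Finset (Fin n)} (h : B ⊆ C) : bSetoid B ≤ bSetoid C := by
  rw [Setoid.le_def]
  intro x y hxy
  rcases hxy with rfl | ⟨hx, hy⟩
  · exact Or.inl rfl
  · exact Or.inr ⟨h hx, h hy⟩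

theorem subset_of_bSetoid_le {B C : Finset (Fin n)} (hB : 1 < B.card)
    (h : bSetoid B ≤ bSetoid C) : B ⊆ C := by
  intro x hx
  obtain ⟨y, hy, hyx⟩ := Finset.exists_mem_ne hB x
  have hrel : bSetoid C x y := Setoid.le_def.mp h (Or.inr ⟨hx, hy⟩)
  rcases hrel with rfl | ⟨hx', _⟩
  · exact absurd rfl hyx
  · exact hx'

theorem bSetoid_inj {B C : Finset (Fin n)} (hB : 1 < B.card) (hC : 1 < C.card)
    (h : bSetoid B = bSetoid C) : B = C :=
  Finset.Subset.antisymm (subset_of_bSetoid_le hB h.le) (subset_of_bSetoid_le hC h.ge)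

theorem bSetoid_eq_bot {B : Finset (Fin n)} (hB : B.card ≤ 1) : bSetoid B = ⊥ := by
  apply Setoid.ext
  intro x y
  rw [setoid_bot_rel]
  constructor
  · rintro (rfl | ⟨hx, hy⟩)
    · rfl
    · exact Finset.card_le_one.mp hB x hx y hy
  · rintro rfl; exact Or.inl rfl

theorem bSetoid_univ_eq_top : bSetoid (Finset.univ : Finset (Fin n)) = ⊤ := by
  apply Setoid.ext
  intro x y
  constructor
  · intro _; trivial
  · intro _; exact Or.inr ⟨Finset.mem_univ x, Finset.mem_univ y⟩

theorem mem_image_perm {g : Equiv.Perm (Fin n)} {B : Finset (Fin n)} {x : Fin n} :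
    x ∈ B.image g ↔ g⁻¹ x ∈ B := by
  simp only [Finset.mem_image]
  constructor
  · rintro ⟨a, ha, rfl⟩; simpa using ha
  · intro hx; exact ⟨g⁻¹ x, hx, by simp⟩

theorem perm_smul_bSetoid (g : Equiv.Perm (Fin n)) (B : Finset (Fin n)) :
    g • bSetoid B = bSetoid (B.image g) := by
  apply Setoid.ext
  intro x y
  rw [perm_smul_setoid_rel]
  constructor
  · rintro (hxy | ⟨hx, hy⟩)
    · exact Or.inl (by simpa using congrArg g hxy)
    · exact Or.inr ⟨mem_image_perm.mpr hx, mem_image_perm.mpr hy⟩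
  · rintro (rfl | ⟨hx, hy⟩)
    · exact Or.inl rfl
    · exact Or.inr ⟨mem_image_perm.mp hx, mem_image_perm.mp hy⟩

theorem bBar_mem_blockSet [NeZero n] {B : Finset (Fin n)} (h0 : (0 : Fin n) ∈ B)
    (s : BarPi n) (hs : s.1 = bSetoid B) : s ∈ blockSet n := by
  intro x y hxy
  rw [hs] at hxy ⊢
  rcases hxy with rfl | ⟨hx, hy⟩
  · exact Or.inr rfl
  · exact Or.inl (Or.inr ⟨hx, h0⟩)

/-- The block of `0` in a partition. -/
noncomputable def blkOf [NeZero n] (s : BarPi n) : Finset (Fin n) :=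
  @Finset.filter _ (fun x => s.1 x 0) (Classical.decPred _) Finset.univ

theorem mem_blkOf [NeZero n] {s : BarPi n} {x : Fin n} : x ∈ blkOf s ↔ s.1 x 0 := by
  simp [blkOf]

theorem zero_mem_blkOf [NeZero n] (s : BarPi n) : (0 : Fin n) ∈ blkOf s :=
  mem_blkOf.mpr (s.1.iseqv.refl 0)

theorem blkOf_spec [NeZero n] (s : BarPi n) (hs : s ∈ blockSet n) :
    s.1 = bSetoid (blkOf s) := by
  apply Setoid.ext
  intro x y
  constructor
  · intro hxy
    rcases hs x y hxy with h0 | rfl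
    · have hy0 : s.1 y 0 := s.1.iseqv.trans (s.1.iseqv.symm hxy) h0
      exact Or.inr ⟨mem_blkOf.mpr h0, mem_blkOf.mpr hy0⟩
    · exact Or.inl rfl
  · rintro (rfl | ⟨hx, hy⟩)
    · exact s.1.iseqv.refl x
    · exact s.1.iseqv.trans (mem_blkOf.mp hx) (s.1.iseqv.symm (mem_blkOf.mp hy))

theorem one_lt_card_blkOf [NeZero n] (s : BarPi n) (hs : s ∈ blockSet n) :
    1 < (blkOf s).card := by
  by_contra hc
  push_neg at hc
  exact s.2.1 (by rw [blkOf_spec s hs]; exact bSetoid_eq_bot hc)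

theorem blkOf_ne_univ [NeZero n] (s : BarPi n) (hs : s ∈ blockSet n) :
    blkOf s ≠ Finset.univ := fun h =>
  s.2.2 (by rw [blkOf_spec s hs, h]; exact bSetoid_univ_eq_top)

/-- The initial blocks of a permutation. -/
def permBlock (h : Equiv.Perm (Fin n)) (k : ℕ) : Finset (Fin n) :=
  Finset.univ.filter (fun x => ((h⁻¹ x : Fin n) : ℕ) ≤ k)

theorem mem_permBlock {h : Equiv.Perm (Fin n)} {k : ℕ} {x : Fin n} :
    x ∈ permBlock h k ↔ ((h⁻¹ x : Fin n) : ℕ) ≤ k := by simp [permBlock]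

theorem permBlock_mono (h : Equiv.Perm (Fin n)) {k l : ℕ} (hkl : k ≤ l) :
    permBlock h k ⊆ permBlock h l := fun _ hx =>
  mem_permBlock.mpr (le_trans (mem_permBlock.mp hx) hkl)

theorem perm_inv_zero [NeZero n] {h : Equiv.Perm (Fin n)} (h0 : h 0 = 0) :
    h⁻¹ (0 : Fin n) = 0 := by
  conv_lhs => rw [← h0]
  exact Equiv.symm_apply_apply h 0

theorem zero_mem_permBlock [NeZero n] {h : Equiv.Perm (Fin n)} (h0 : h 0 = 0) (k : ℕ) :
    (0 : Fin n) ∈ permBlock h k := by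
  rw [mem_permBlock, perm_inv_zero h0]
  simp

theorem permBlock_eq_image (h : Equiv.Perm (Fin n)) (k : ℕ) :
    permBlock h k = (Finset.univ.filter (fun y : Fin n => (y : ℕ) ≤ k)).image h := by
  ext x
  rw [mem_permBlock]
  simp only [Finset.mem_image, Finset.mem_filter, Finset.mem_univ, true_and]
  constructor
  · intro hx; exact ⟨h⁻¹ x, hx, by simp⟩
  · rintro ⟨y, hy, rfl⟩; simpa using hy

theorem card_filter_val_le {k : ℕ} (hk : k < n) :
    (Finset.univ.filter (fun y : Fin n => (y : ℕ) ≤ k)).card = k + 1 := by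
  have h : (Finset.univ.filter (fun y : Fin n => (y : ℕ) ≤ k)) = Finset.Iic (⟨k, hk⟩ : Fin n) := by
    ext y
    simp [Fin.le_def]
  rw [h, Fin.card_Iic]

theorem card_permBlock (h : Equiv.Perm (Fin n)) {k : ℕ} (hk : k < n) :
    (permBlock h k).card = k + 1 := by
  rw [permBlock_eq_image, Finset.card_image_of_injective _ h.injective, card_filter_val_le hk]

theorem permBlock_of_le {h : Equiv.Perm (Fin n)} {k : ℕ} (hk : n ≤ k + 1) :
    permBlock h k = Finset.univ := by
  apply Finset.eq_univ_iff_forall.mpr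
  intro x
  rw [mem_permBlock]
  have := (h⁻¹ x).2
  omega

theorem permBlock_zero [NeZero n] {g : Equiv.Perm (Fin n)} (hg : g 0 = 0) :
    permBlock g 0 = {(0 : Fin n)} := by
  have hginv : g⁻¹ (0 : Fin n) = 0 := perm_inv_zero hg
  ext x
  rw [mem_permBlock]
  simp only [Nat.le_zero, Finset.mem_singleton]
  constructor
  · intro hx
    have hx0 : g⁻¹ x = 0 := Fin.ext (by simpa using hx)
    have : g (g⁻¹ x) = g 0 := by rw [hx0]
    simpa [hg] using this
  · rintro rfl
    rw [hginv]
    simp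

theorem permBlock_mul (g h : Equiv.Perm (Fin n)) (k : ℕ) :
    permBlock (g * h) k = (permBlock h k).image g := by
  ext x
  rw [mem_image_perm, mem_permBlock, mem_permBlock]
  have : ((g * h)⁻¹ : Equiv.Perm (Fin n)) x = h⁻¹ (g⁻¹ x) := by
    rw [mul_inv_rev]; rfl
  rw [this]

theorem perm_eq_of_permBlock_eq {g h : Equiv.Perm (Fin n)}
    (H : ∀ k, permBlock g k = permBlock h k) : g = h := by
  have key : ∀ x : Fin n, ((g⁻¹ x : Fin n) : ℕ) = ((h⁻¹ x : Fin n) : ℕ) := by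
    intro x
    have h1 : x ∈ permBlock h ((g⁻¹ x : Fin n) : ℕ) := by
      rw [← H]; exact mem_permBlock.mpr le_rfl
    have h2 : x ∈ permBlock g ((h⁻¹ x : Fin n) : ℕ) := by
      rw [H]; exact mem_permBlock.mpr le_rfl
    exact le_antisymm (mem_permBlock.mp h2) (mem_permBlock.mp h1)
  have hinv : g⁻¹ = h⁻¹ := Equiv.ext fun x => Fin.ext (key x)
  exact inv_injective hinv

theorem permBlock_card_facts [NeZero n] (hn : 3 ≤ n) (h : Equiv.Perm (Fin n)) {k : ℕ}
    (hk : k ∈ Finset.Icc 1 (n - 2)) :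
    1 < (permBlock h k).card ∧ permBlock h k ≠ Finset.univ := by
  rw [Finset.mem_Icc] at hk
  have hkn : k < n := by omega
  have hcard := card_permBlock h hkn
  constructor
  · omega
  · intro hu
    have hcu := congrArg Finset.card hu
    rw [hcard, Finset.card_univ, Fintype.card_fin] at hcu
    omega

/-- The element of `Π̄_n` whose only nontrivial block is the `k`-th initial block of `h`. -/
noncomputable def barOf [NeZero n] (hn : 3 ≤ n) (h : Equiv.Perm (Fin n)) (k : ℕ)
    (hk : k ∈ Finset.Icc 1 (n - 2)) : BarPi n :=
  ⟨bSetoid (permBlock h k),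
    bSetoid_ne_bot (permBlock_card_facts hn h hk).1,
    bSetoid_ne_top (by omega) (permBlock_card_facts hn h hk).2⟩

theorem barOf_inj [NeZero n] (hn : 3 ≤ n) (g h : Equiv.Perm (Fin n)) {k l : ℕ}
    (hk : k ∈ Finset.Icc 1 (n - 2)) (hl : l ∈ Finset.Icc 1 (n - 2))
    (he : barOf hn g k hk = barOf hn h l hl) :
    k = l ∧ permBlock g k = permBlock h l := by
  have hs : bSetoid (permBlock g k) = bSetoid (permBlock h l) := congrArg Subtype.val he
  have hB : permBlock g k = permBlock h l :=
    bSetoid_inj (permBlock_card_facts hn g hk).1 (permBlock_card_facts hn h hl).1 hs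
  have hc := congrArg Finset.card hB
  rw [Finset.mem_Icc] at hk hl
  rw [card_permBlock g (by omega), card_permBlock h (by omega)] at hc
  exact ⟨by omega, hB⟩

/-- The chain in `Π̄_n` associated to a permutation, as a finset. -/
noncomputable def PhiF [NeZero n] (hn : 3 ≤ n) (h : Equiv.Perm (Fin n)) : Finset (BarPi n) :=
  (Finset.Icc 1 (n - 2)).attach.image (fun k => barOf hn h k.1 k.2)

theorem card_PhiF [NeZero n] (hn : 3 ≤ n) (h : Equiv.Perm (Fin n)) :
    (PhiF hn h).card = n - 2 := by
  rw [PhiF, Finset.card_image_of_injOn, Finset.card_attach, Nat.card_Icc]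
  · omega
  · intro a _ b _ hab
    exact Subtype.ext (barOf_inj hn h h a.2 b.2 hab).1

/-- The chain in the face poset associated to a permutation. -/
noncomputable def PhiC [NeZero n] (hn : 3 ≤ n) (h : Equiv.Perm (Fin n)) : FacePoset n :=
  ⟨PhiF hn h, by
    refine ⟨barOf hn h 1 (Finset.mem_Icc.mpr ⟨le_rfl, by omega⟩), ?_⟩
    exact Finset.mem_image.mpr ⟨⟨1, Finset.mem_Icc.mpr ⟨le_rfl, by omega⟩⟩, Finset.mem_attach _ _, rfl⟩,
   by
    intro x hx y hy hxy
    simp only [PhiF, Finset.coe_image, Set.mem_image, Finset.mem_coe] at hx hy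
    obtain ⟨⟨k, hk⟩, _, rfl⟩ := hx
    obtain ⟨⟨l, hl⟩, _, rfl⟩ := hy
    rcases le_total k l with hkl | hkl
    · exact Or.inl (show bSetoid (permBlock h k) ≤ bSetoid (permBlock h l) from
        bSetoid_mono (permBlock_mono h hkl))
    · exact Or.inr (show bSetoid (permBlock h l) ≤ bSetoid (permBlock h k) from
        bSetoid_mono (permBlock_mono h hkl))⟩

theorem PhiC_mem_Cn [NeZero n] (hn : 3 ≤ n) {h : Equiv.Perm (Fin n)} (h0 : h 0 = 0) :
    PhiC hn h ∈ Cn n := by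
  constructor
  · intro s hs
    simp only [PhiC, PhiF, Finset.coe_image, Set.mem_image, Finset.mem_coe] at hs
    obtain ⟨⟨k, hk⟩, _, rfl⟩ := hs
    exact bBar_mem_blockSet (zero_mem_permBlock h0 k) _ rfl
  · exact card_PhiF hn h

theorem PhiC_smul [NeZero n] (hn : 3 ≤ n) (g h : Equiv.Perm (Fin n)) :
    g • PhiC hn h = PhiC hn (g * h) := by
  apply Subtype.ext
  show (PhiF hn h).image (fun s => g • s) = PhiF hn (g * h)
  rw [PhiF, PhiF, Finset.image_image]
  congr 1
  funext k
  show g • barOf hn h k.1 k.2 = barOf hn (g * h) k.1 k.2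
  apply Subtype.ext
  show g • bSetoid (permBlock h k.1) = bSetoid (permBlock (g * h) k.1)
  rw [perm_smul_bSetoid, ← permBlock_mul]

theorem PhiC_inj [NeZero n] (hn : 3 ≤ n) {g h : Equiv.Perm (Fin n)}
    (hg : g 0 = 0) (hh : h 0 = 0) (he : PhiC hn g = PhiC hn h) : g = h := by
  have hF : PhiF hn g = PhiF hn h := congrArg Subtype.val he
  apply perm_eq_of_permBlock_eq
  intro k
  rcases Nat.lt_or_ge k 1 with hk1 | hk1
  · have hk0 : k = 0 := by omega
    rw [hk0, permBlock_zero hg, permBlock_zero hh]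
  rcases Nat.lt_or_ge (n - 2) k with hk2 | hk2
  · rw [permBlock_of_le (by omega), permBlock_of_le (by omega)]
  · have hkm : k ∈ Finset.Icc 1 (n - 2) := Finset.mem_Icc.mpr ⟨hk1, hk2⟩
    have hmem : barOf hn g k hkm ∈ PhiF hn h := by
      rw [← hF]
      exact Finset.mem_image.mpr ⟨⟨k, hkm⟩, Finset.mem_attach _ _, rfl⟩
    obtain ⟨⟨l, hl⟩, _, heq⟩ := Finset.mem_image.mp hmem
    obtain ⟨hlk, hB⟩ := barOf_inj hn h g hl hkm heq
    rw [← hB, hlk]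

theorem PhiC_surj [NeZero n] (hn : 3 ≤ n) {c : FacePoset n} (hc : c ∈ Cn n) :
    ∃ h : Equiv.Perm (Fin n), h 0 = 0 ∧ PhiC hn h = c := by
  classical
  obtain ⟨hsub, hcard⟩ := hc
  have hmem : ∀ s ∈ c.1, s ∈ blockSet n := fun s hs => hsub (Finset.mem_coe.mpr hs)
  -- injectivity of the block-cardinality map on the chain
  have hinj : Set.InjOn (fun s : BarPi n => (blkOf s).card) ↑c.1 := by
    intro s hs t ht hst
    rcases eq_or_ne s t with rfl | hne
    · rfl
    have hs' := hmem s (Finset.mem_coe.mp hs)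
    have ht' := hmem t (Finset.mem_coe.mp ht)
    rcases c.2.2 hs ht hne with hle | hle
    · have hBle : bSetoid (blkOf s) ≤ bSetoid (blkOf t) := by
        rw [← blkOf_spec s hs', ← blkOf_spec t ht']; exact hle
      have hBB : blkOf s ⊆ blkOf t := subset_of_bSetoid_le (one_lt_card_blkOf s hs') hBle
      have hBeq : blkOf s = blkOf t := Finset.eq_of_subset_of_card_le hBB (le_of_eq hst.symm)
      exact Subtype.ext (by rw [blkOf_spec s hs', blkOf_spec t ht', hBeq])
    · have hBle : bSetoid (blkOf t) ≤ bSetoid (blkOf s) := by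
        rw [← blkOf_spec s hs', ← blkOf_spec t ht']; exact hle
      have hBB : blkOf t ⊆ blkOf s := subset_of_bSetoid_le (one_lt_card_blkOf t ht') hBle
      have hBeq : blkOf t = blkOf s := Finset.eq_of_subset_of_card_le hBB (le_of_eq hst)
      exact Subtype.ext (by rw [blkOf_spec s hs', blkOf_spec t ht', hBeq])
  have hcard_bound : ∀ s ∈ c.1, (blkOf s).card ∈ Finset.Icc 2 (n - 1) := by
    intro s hs
    have hs' := hmem s hs
    have h1 := one_lt_card_blkOf s hs'
    have h2 : (blkOf s).card < n := by
      have := Finset.card_lt_card (Finset.ssubset_univ_iff.mpr (blkOf_ne_univ s hs'))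
      rwa [Finset.card_univ, Fintype.card_fin] at this
    exact Finset.mem_Icc.mpr ⟨by omega, by omega⟩
  have himg : c.1.image (fun s => (blkOf s).card) = Finset.Icc 2 (n - 1) := by
    apply Finset.eq_of_subset_of_card_le
    · intro m hm
      obtain ⟨s, hs, rfl⟩ := Finset.mem_image.mp hm
      exact hcard_bound s hs
    · rw [Finset.card_image_of_injOn hinj, hcard, Nat.card_Icc]
      omega
  have hpick : ∀ m ∈ Finset.Icc 2 (n - 1), ∃ s, s ∈ c.1 ∧ (blkOf s).card = m := by
    intro m hm
    rw [← himg] at hm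
    obtain ⟨s, hs, hsm⟩ := Finset.mem_image.mp hm
    exact ⟨s, hs, hsm⟩
  choose pick hpickmem hpickcard using hpick
  -- the flag of blocks
  set D : ℕ → Finset (Fin n) := fun m =>
    if hm : m ∈ Finset.Icc 2 (n - 1) then blkOf (pick m hm)
    else if m = 0 then ∅ else if m = 1 then {0} else Finset.univ with hD
  have hD0 : D 0 = ∅ := by
    simp only [hD]
    rw [dif_neg (by rw [Finset.mem_Icc]; omega)]
    simp
  have hD1 : D 1 = {(0 : Fin n)} := by
    simp only [hD]
    rw [dif_neg (by rw [Finset.mem_Icc]; omega)]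
    simp
  have hDuniv : ∀ m, n ≤ m → D m = Finset.univ := by
    intro m hm
    simp only [hD]
    rw [dif_neg (by rw [Finset.mem_Icc]; omega), if_neg (by omega : ¬ m = 0), if_neg (by omega : ¬ m = 1)]
  have hDmid : ∀ m (hm2 : m ∈ Finset.Icc 2 (n - 1)), D m = blkOf (pick m hm2) := by
    intro m hm2
    simp only [hD]
    rw [dif_pos hm2]
  have hDcard : ∀ m, m ≤ n → (D m).card = m := by
    intro m hm
    by_cases h2 : m ∈ Finset.Icc 2 (n - 1)
    · rw [hDmid m h2]
      exact hpickcard m h2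
    · rw [Finset.mem_Icc] at h2
      rcases Nat.lt_or_ge m 2 with hm2 | hm2
      · interval_cases m
        · rw [hD0]; simp
        · rw [hD1]; simp
      · have hmn : m = n := by omega
        rw [hDuniv m (by omega), Finset.card_univ, Fintype.card_fin, hmn]
  have hDsub : ∀ m, m < n → D m ⊆ D (m + 1) := by
    intro m hm
    rcases Nat.lt_or_ge m 1 with hm0 | hm1
    · have hz : m = 0 := by omega
      subst hz
      rw [hD0]
      exact Finset.empty_subset _
    rcases Nat.lt_or_ge m 2 with hm2 | hm2
    · have ho : m = 1 := by omega
      subst ho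
      have h2m : (2 : ℕ) ∈ Finset.Icc 2 (n - 1) := Finset.mem_Icc.mpr ⟨le_rfl, by omega⟩
      show D 1 ⊆ D 2
      rw [hD1, hDmid 2 h2m]
      intro x hx
      rw [Finset.mem_singleton] at hx
      subst hx
      exact zero_mem_blkOf _
    rcases Nat.lt_or_ge m (n - 1) with hm3 | hm3
    · have hmI : m ∈ Finset.Icc 2 (n - 1) := Finset.mem_Icc.mpr ⟨hm2, by omega⟩
      have hmI' : m + 1 ∈ Finset.Icc 2 (n - 1) := Finset.mem_Icc.mpr ⟨by omega, by omega⟩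
      rw [hDmid m hmI, hDmid (m + 1) hmI']
      have hsmem := hpickmem m hmI
      have htmem := hpickmem (m + 1) hmI'
      have hs' := hmem _ hsmem
      have ht' := hmem _ htmem
      have hne : pick m hmI ≠ pick (m + 1) hmI' := by
        intro hts
        have h1 := hpickcard m hmI
        rw [hts, hpickcard (m + 1) hmI'] at h1
        omega
      rcases c.2.2 (Finset.mem_coe.mpr hsmem) (Finset.mem_coe.mpr htmem) hne with hle | hle
      · have hBle : bSetoid (blkOf (pick m hmI)) ≤ bSetoid (blkOf (pick (m + 1) hmI')) := by
          rw [← blkOf_spec _ hs', ← blkOf_spec _ ht']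
          exact hle
        exact subset_of_bSetoid_le (one_lt_card_blkOf _ hs') hBle
      · have hBle : bSetoid (blkOf (pick (m + 1) hmI')) ≤ bSetoid (blkOf (pick m hmI)) := by
          rw [← blkOf_spec _ hs', ← blkOf_spec _ ht']
          exact hle
        have hBB := subset_of_bSetoid_le (one_lt_card_blkOf _ ht') hBle
        have hcc := Finset.card_le_card hBB
        rw [hpickcard m hmI, hpickcard (m + 1) hmI'] at hcc
        omega
    · have hm4 : m = n - 1 := by omega
      subst hm4
      rw [hDuniv (n - 1 + 1) (by omega)]
      exact Finset.subset_univ _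
  have hDmono : ∀ k l, k ≤ l → l ≤ n → D k ⊆ D l := by
    intro k l hkl hln
    induction l with
    | zero =>
      have hz : k = 0 := by omega
      subst hz
      exact subset_rfl
    | succ l ih =>
      rcases Nat.lt_or_ge k (l + 1) with hcase | hcase
      · exact Finset.Subset.trans (ih (by omega) (by omega)) (hDsub l (by omega))
      · have hz : k = l + 1 := by omega
        subst hz
        exact subset_rfl
  have hdiff : ∀ m, m < n → ∃ a, D (m + 1) \ D m = {a} := by
    intro m hm
    apply Finset.card_eq_one.mp
    rw [Finset.card_sdiff_of_subset (hDsub m hm), hDcard (m + 1) (by omega), hDcard m (by omega)]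
    omega
  choose f0 hf0 using hdiff
  set f : Fin n → Fin n := fun x => f0 x.1 x.2 with hf
  have hfmem : ∀ x : Fin n, f x ∈ D (x.1 + 1) ∧ f x ∉ D x.1 := by
    intro x
    have hx : f x ∈ D (x.1 + 1) \ D x.1 := by
      rw [hf0 x.1 x.2]
      exact Finset.mem_singleton_self _
    exact Finset.mem_sdiff.mp hx
  have hfinj : Function.Injective f := by
    intro x y hxy
    by_contra hne
    rcases Nat.lt_trichotomy x.1 y.1 with h | h | h
    · have hmem1 : f x ∈ D y.1 := hDmono (x.1 + 1) y.1 (by omega) (by omega) (hfmem x).1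
      rw [hxy] at hmem1
      exact (hfmem y).2 hmem1
    · exact hne (Fin.ext h)
    · have hmem1 : f y ∈ D x.1 := hDmono (y.1 + 1) x.1 (by omega) (by omega) (hfmem y).1
      rw [← hxy] at hmem1
      exact (hfmem x).2 hmem1
  have hfbij : Function.Bijective f := Finite.injective_iff_bijective.mp hfinj
  set h : Equiv.Perm (Fin n) := Equiv.ofBijective f hfbij with hh
  have happly : ∀ x, h x = f x := fun x => rfl
  have hh0 : h 0 = 0 := by
    have h1 : f 0 ∈ D ((0 : Fin n).1 + 1) := (hfmem 0).1
    rw [show ((0 : Fin n)).1 = 0 from rfl] at h1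
    rw [hD1] at h1
    exact Finset.mem_singleton.mp h1
  have himage : ∀ k, k < n → permBlock h k = D (k + 1) := by
    intro k hk
    apply Finset.eq_of_subset_of_card_le
    · intro x hx
      rw [mem_permBlock] at hx
      have hx2 : f (h⁻¹ x) = x := by
        rw [← happly]
        exact Equiv.apply_symm_apply h x
      have hmem1 : f (h⁻¹ x) ∈ D ((h⁻¹ x).1 + 1) := (hfmem (h⁻¹ x)).1
      rw [hx2] at hmem1
      exact hDmono ((h⁻¹ x).1 + 1) (k + 1) (by omega) (by omega) hmem1
    · rw [card_permBlock h hk, hDcard (k + 1) (by omega)]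
  refine ⟨h, hh0, ?_⟩
  apply Subtype.ext
  show PhiF hn h = c.1
  apply Finset.eq_of_subset_of_card_le
  · intro s hs
    obtain ⟨⟨k, hk⟩, _, rfl⟩ := Finset.mem_image.mp hs
    have hk' := Finset.mem_Icc.mp hk
    have hmemI : (k + 1) ∈ Finset.Icc 2 (n - 1) := Finset.mem_Icc.mpr ⟨by omega, by omega⟩
    have hDk : D (k + 1) = blkOf (pick (k + 1) hmemI) := hDmid (k + 1) hmemI
    have hbar : barOf hn h k hk = pick (k + 1) hmemI := by
      apply Subtype.ext
      show bSetoid (permBlock h k) = _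
      rw [himage k (by omega), hDk,
        ← blkOf_spec (pick (k + 1) hmemI) (hmem _ (hpickmem (k + 1) hmemI))]
    rw [hbar]
    exact hpickmem (k + 1) hmemI
  · rw [hcard, card_PhiF]

end AuxDev


/-- For `n ≥ 3` and any subgroup `G` of `S_1 × S_{n-1}`, the number of `G`-orbits on the
set `C_n` equals the index of `G` in `S_1 × S_{n-1}`. -/
theorem card_orbits_Cn_eq_index (n : ℕ) [NeZero n] (hn : 3 ≤ n) (G : Subgroup (S1Sn n)) :
    {S : Set (FacePoset n) | ∃ σ ∈ Cn n, S = MulAction.orbit G σ}.ncard = G.index := by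
  classical
  set O := {S : Set (FacePoset n) | ∃ σ ∈ Cn n, S = MulAction.orbit G σ} with hOdef
  have hmemS : ∀ h : S1Sn n, (h : Equiv.Perm (Fin n)) 0 = 0 := by
    intro h
    have hm := MulAction.mem_stabilizer_iff.mp h.2
    simpa [Equiv.Perm.smul_def] using hm
  set Φ : S1Sn n → FacePoset n := fun h => PhiC hn (h : Equiv.Perm (Fin n)) with hΦ
  have hΦCn : ∀ h : S1Sn n, Φ h ∈ Cn n := fun h => PhiC_mem_Cn hn (hmemS h)
  have hΦinj : Function.Injective Φ := fun a b hab =>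
    Subtype.ext (PhiC_inj hn (hmemS a) (hmemS b) hab)
  have hGsmul : ∀ (g : G) (h : S1Sn n), g • Φ h = Φ (↑g * h) := by
    intro g h
    show ((g : S1Sn n) : Equiv.Perm (Fin n)) • PhiC hn (h : Equiv.Perm (Fin n)) = _
    rw [PhiC_smul]
    rfl
  have horb : ∀ h₁ h₂ : S1Sn n,
      MulAction.orbit G (Φ h₁) = MulAction.orbit G (Φ h₂) ↔ h₂ * h₁⁻¹ ∈ G := by
    intro h₁ h₂
    constructor
    · intro he
      have hmem2 : Φ h₂ ∈ MulAction.orbit G (Φ h₁) := by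
        rw [he]; exact MulAction.mem_orbit_self _
      obtain ⟨g, hg⟩ := MulAction.mem_orbit_iff.mp hmem2
      rw [hGsmul] at hg
      have heq := hΦinj hg
      rw [← heq]
      simpa using g.2
    · intro hg
      symm
      rw [MulAction.orbit_eq_iff]
      refine MulAction.mem_orbit_iff.mpr ⟨⟨h₂ * h₁⁻¹, hg⟩, ?_⟩
      rw [hGsmul]
      congr 1
      show h₂ * h₁⁻¹ * h₁ = h₂
      rw [inv_mul_cancel_right]
  have hO : ∀ h : S1Sn n, MulAction.orbit G (Φ h) ∈ O := fun h => ⟨Φ h, hΦCn h, rfl⟩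
  let F : (S1Sn n ⧸ G) → O := fun q =>
    Quotient.liftOn' q (fun h => (⟨MulAction.orbit G (Φ h⁻¹), hO h⁻¹⟩ : O))
      (by
        intro a b hab
        have hab' : a⁻¹ * b ∈ G := QuotientGroup.leftRel_apply.mp hab
        apply Subtype.ext
        show MulAction.orbit G (Φ a⁻¹) = MulAction.orbit G (Φ b⁻¹)
        rw [horb]
        simpa using G.inv_mem hab')
  have hFbij : Function.Bijective F := by
    constructor
    · intro q₁ q₂ he
      obtain ⟨a, rfl⟩ := q₁.exists_rep
      obtain ⟨b, rfl⟩ := q₂.exists_rep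
      have horb' : MulAction.orbit G (Φ a⁻¹) = MulAction.orbit G (Φ b⁻¹) :=
        congrArg Subtype.val he
      have hg : b⁻¹ * (a⁻¹)⁻¹ ∈ G := (horb _ _).mp horb'
      exact Quotient.sound' (QuotientGroup.leftRel_apply.mpr (by simpa using G.inv_mem hg))
    · rintro ⟨S, σ, hσ, rfl⟩
      obtain ⟨p, hp0, hpΦ⟩ := PhiC_surj hn hσ
      have hpS : p ∈ S1Sn n :=
        MulAction.mem_stabilizer_iff.mpr (by simpa [Equiv.Perm.smul_def] using hp0)
      refine ⟨Quotient.mk'' ((⟨p, hpS⟩ : S1Sn n)⁻¹), ?_⟩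
      apply Subtype.ext
      show MulAction.orbit G (Φ ((⟨p, hpS⟩ : S1Sn n)⁻¹)⁻¹) = MulAction.orbit G σ
      rw [inv_inv]
      have hps : Φ (⟨p, hpS⟩ : S1Sn n) = σ := hpΦ
      rw [hps]
  have e : (S1Sn n ⧸ G) ≃ O := Equiv.ofBijective F hFbij
  rw [← Nat.card_coe_set_eq, Subgroup.index_eq_card]
  exact Nat.card_congr e.symm
end
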